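/- arXiv:math/0602036 — 4 statements merged into one kernel-verified Lean document; each statement's English description precedes it below -/
import Mathlib

section
/- Let H be a subgroup of the group of orientation-preserving homeomorphisms of [0,1] and let A = (a,b) be an orbital of H, i.e., a connected component of the support of the action of H. Then for any c, d ∈ A with c < d there exists g ∈ H with g(c) > d. -/
/-- The support of a map of the line: points it moves. -/
def Supp (f : ℝ → ℝ) : Set ℝ := {x | f x ≠ x}

/-- `A` is an orbital of `f`: a connected component of the support of `f`. -/
def IsOrbital (f : ℝ → ℝ) (A : Set ℝ) : Prop :=
  ∃ x ∈ Supp f, A = connectedComponentIn (Supp f) x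

/-- An orientation-preserving homeomorphism of `[0,1]`, encoded as a strictly
increasing bijection of `ℝ` fixing every point outside `(0,1)`. -/
def Homeo01 (f : Equiv.Perm ℝ) : Prop :=
  StrictMono f ∧ ∀ x ∉ Set.Ioo (0:ℝ) 1, f x = x

/-- `f` is affine in a neighbourhood of `x`. -/
def LocallyAffineAt (f : ℝ → ℝ) (x : ℝ) : Prop :=
  ∃ ε > 0, ∃ m b : ℝ, ∀ y : ℝ, |y - x| < ε → f y = m * y + b

/-- Piecewise linear with finitely many breakpoints. -/
def IsPL (f : ℝ → ℝ) : Prop := {x | ¬ LocallyAffineAt f x}.Finite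

/-- Membership in `PL₊(I)`. -/
def PLHomeo (f : Equiv.Perm ℝ) : Prop := Homeo01 f ∧ IsPL f

/-- Support of the action of a subgroup. -/
def GSupp (G : Subgroup (Equiv.Perm ℝ)) : Set ℝ := {x | ∃ g ∈ G, g x ≠ x}

/-- An orbital of a subgroup: a component of the support of its action. -/
def IsGroupOrbital (G : Subgroup (Equiv.Perm ℝ)) (A : Set ℝ) : Prop :=
  ∃ x ∈ GSupp G, A = connectedComponentIn (GSupp G) x

/-- `b` is a breakpoint of `f`: one-sided derivatives exist but differ. -/
def Breakpoint (f : ℝ → ℝ) (b : ℝ) : Prop :=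
  b ∈ Set.Ioo (0:ℝ) 1 ∧
  DifferentiableWithinAt ℝ f (Set.Iio b) b ∧
  DifferentiableWithinAt ℝ f (Set.Ioi b) b ∧
  derivWithin f (Set.Iio b) b ≠ derivWithin f (Set.Ioi b) b

/-- `G` admits a transition chain of length two. -/
def HasTransitionChain2 (G : Subgroup (Equiv.Perm ℝ)) : Prop :=
  ∃ g ∈ G, ∃ h ∈ G, ∃ a₁ b₁ a₂ b₂ : ℝ,
    IsOrbital g (Set.Ioo a₁ a₂) ∧ IsOrbital h (Set.Ioo b₁ b₂) ∧
    a₁ < b₁ ∧ b₁ < a₂ ∧ a₂ < b₂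

/-- A tower of the subgroup `G`: a set of signed orbitals `(A, g)` whose orbitals
form a chain under inclusion, with exactly one signature per orbital. -/
def IsTower (G : Subgroup (Equiv.Perm ℝ)) (T : Set (Set ℝ × Equiv.Perm ℝ)) : Prop :=
  (∀ p ∈ T, p.2 ∈ G ∧ IsOrbital p.2 p.1) ∧
  (∀ p ∈ T, ∀ q ∈ T, p.1 ⊆ q.1 ∨ q.1 ⊆ p.1) ∧
  (∀ p ∈ T, ∀ q ∈ T, p.1 = q.1 → p = q)

/-- The depth of `G` equals `n`: there is a tower of height `n` and every tower
is finite with height at most `n`. -/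
def DepthEq (G : Subgroup (Equiv.Perm ℝ)) (n : ℕ) : Prop :=
  (∃ T, IsTower G T ∧ T.Finite ∧ T.ncard = n) ∧
  ∀ T, IsTower G T → T.Finite ∧ T.ncard ≤ n

theorem stmt6 (H : Subgroup (Equiv.Perm ℝ)) (hH : ∀ g ∈ H, Homeo01 g)
    (hfin : ∀ g ∈ H, {A : Set ℝ | IsOrbital ⇑g A}.Finite)
    (A : Set ℝ) (hA : IsGroupOrbital H A) (c d : ℝ) (hc : c ∈ A) (hd : d ∈ A)
    (hcd : c < d) : ∃ g ∈ H, d < g c := by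
  by_contra hcon
  push_neg at hcon
  obtain ⟨x₀, hx₀, hAeq⟩ := hA
  have hAsub : A ⊆ GSupp H := hAeq ▸ connectedComponentIn_subset _ _
  have hOrd : A.OrdConnected := by
    rw [hAeq]
    exact (isPreconnected_connectedComponentIn).ordConnected
  set S : Set ℝ := {x | ∃ g ∈ H, g c = x} with hS
  have hcS : c ∈ S := ⟨1, H.one_mem, rfl⟩
  have hub : ∀ x ∈ S, x ≤ d := by
    rintro x ⟨g, hg, rfl⟩; exact hcon g hg
  have hSbdd : BddAbove S := ⟨d, hub⟩
  set t := sSup S with ht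
  have htub : ∀ x ∈ S, x ≤ t := fun x hx => le_csSup hSbdd hx
  have hct : c ≤ t := htub c hcS
  have htd : t ≤ d := csSup_le ⟨c, hcS⟩ hub
  have htA : t ∈ A := hOrd.out hc hd ⟨hct, htd⟩
  obtain ⟨h, hh, hht⟩ := hAsub htA
  have key : ∃ h' : Equiv.Perm ℝ, h' ∈ H ∧ t < h' t := by
    rcases lt_or_gt_of_ne hht with hlt | hgt
    · refine ⟨h⁻¹, H.inv_mem hh, ?_⟩
      have hmono := (hH h hh).1
      by_contra hle
      push_neg at hle
      have := hmono.monotone hle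
      rw [show h (h⁻¹ t) = t from Equiv.apply_symm_apply h t] at this
      exact absurd (this.trans_lt hlt) (lt_irrefl t)
    · exact ⟨h, hh, hgt⟩
  obtain ⟨h', hh', hth'⟩ := key
  have hmono := (hH h' hh').1
  set u := (h'⁻¹ : Equiv.Perm ℝ) t with hu
  have huinv : h' u = t := Equiv.apply_symm_apply h' t
  have hult : u < t := by
    have := hth'
    rw [← huinv] at this
    exact hmono.lt_iff_lt.mp (huinv ▸ this)
  obtain ⟨x, hxS, hux⟩ := exists_lt_of_lt_csSup ⟨c, hcS⟩ hult
  obtain ⟨g, hg, rfl⟩ := hxS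
  have hlt2 : t < h' (g c) := huinv ▸ hmono hux
  have hmem : h' (g c) ∈ S := ⟨h' * g, H.mul_mem hh' hg, rfl⟩
  exact absurd (htub _ hmem) (not_le.2 hlt2)
end

section
/- If G is a subgroup of PL₊(I) that does not admit a transition chain of length two, then any two orbitals A of g ∈ G and B of h ∈ G that intersect satisfy: closure(A) ⊆ B, or closure(B) ⊆ A, or A = B. -/
theorem Equiv.Perm.apply_inv_self {α : Type*} (f : Equiv.Perm α) (x : α) : f (f⁻¹ x) = x := by
  simp only [Equiv.Perm.coe_inv, Equiv.apply_symm_apply]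

lemma Homeo01.cont {f : Equiv.Perm ℝ} (hf : Homeo01 f) : Continuous f :=
  hf.1.monotone.continuous_of_surjective f.surjective

lemma supp_isOpen {f : Equiv.Perm ℝ} (hf : Homeo01 f) : IsOpen (Supp ⇑f) :=
  isOpen_ne_fun hf.cont continuous_id

lemma supp_subset {f : Equiv.Perm ℝ} (hf : Homeo01 f) : Supp ⇑f ⊆ Set.Ioo 0 1 := by
  intro x hx; by_contra h; exact hx (hf.2 x h)

lemma inv_fix {f : Equiv.Perm ℝ} {c : ℝ} (hc : f c = c) : f⁻¹ c = c := by
  simp [Equiv.Perm.inv_def, Equiv.symm_apply_eq, hc]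

lemma mem_supp_inv {f : Equiv.Perm ℝ} {x : ℝ} (hx : x ∈ Supp ⇑f) : x ∈ Supp ⇑f⁻¹ := by
  simp only [Supp, Set.mem_setOf_eq] at *
  intro h
  apply hx
  have := congrArg f h
  simpa [Equiv.Perm.inv_def] using this.symm

lemma Ioo_eq_Ioo {a b c d : ℝ} (hab : a < b) (h : Set.Ioo a b = Set.Ioo c d) : a = c ∧ b = d := by
  have hcd : c < d := by
    rcases Set.nonempty_Ioo.2 hab with ⟨x, hx⟩
    have hx' : x ∈ Set.Ioo c d := h ▸ hx
    exact lt_trans hx'.1 hx'.2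
  constructor
  · have := congrArg sInf h; rwa [csInf_Ioo hab, csInf_Ioo hcd] at this
  · have := congrArg sSup h; rwa [csSup_Ioo hab, csSup_Ioo hcd] at this

lemma orbital_shape {f : Equiv.Perm ℝ} (hf : Homeo01 f) {A : Set ℝ} (hA : IsOrbital ⇑f A) :
    ∃ a b : ℝ, a < b ∧ A = Set.Ioo a b ∧ A ⊆ Supp ⇑f ∧ f a = a ∧ f b = b := by
  obtain ⟨x, hx, rfl⟩ := hA
  set S := Supp ⇑f with hS
  have hSopen : IsOpen S := supp_isOpen hf
  set A := connectedComponentIn S x with hAdef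
  have hsub : A ⊆ S := connectedComponentIn_subset S x
  have hxA : x ∈ A := mem_connectedComponentIn hx
  have hopen : IsOpen A := hSopen.connectedComponentIn
  have hconn : IsPreconnected A := (isConnected_connectedComponentIn_iff.2 hx).isPreconnected
  have hbdd : A ⊆ Set.Ioo 0 1 := hsub.trans (supp_subset hf)
  have hne : A.Nonempty := ⟨x, hxA⟩
  have hba : BddAbove A := bddAbove_Ioo.mono hbdd
  have hbb : BddBelow A := bddBelow_Ioo.mono hbdd
  set a := sInf A with ha
  set b := sSup A with hb
  have hAIoo : A = Set.Ioo a b := by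
    ext y
    constructor
    · intro hy
      obtain ⟨ε, hε, hball⟩ := Metric.isOpen_iff.1 hopen y hy
      rw [Real.ball_eq_Ioo] at hball
      constructor
      · have h1 : y - ε/2 ∈ A := hball ⟨by linarith, by linarith⟩
        exact lt_of_le_of_lt (csInf_le hbb h1) (by linarith)
      · have h1 : y + ε/2 ∈ A := hball ⟨by linarith, by linarith⟩
        exact lt_of_lt_of_le (by linarith) (le_csSup hba h1)
    · intro hy
      obtain ⟨p, hp, hpy⟩ := exists_lt_of_csInf_lt hne hy.1
      obtain ⟨q, hq, hyq⟩ := exists_lt_of_lt_csSup hne hy.2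
      exact hconn.ordConnected.out hp hq ⟨hpy.le, hyq.le⟩
  have hxab : x ∈ Set.Ioo a b := hAIoo ▸ hxA
  refine ⟨a, b, lt_trans hxab.1 hxab.2, hAIoo, hsub, ?_, ?_⟩
  · by_contra hfa
    have : Set.Icc a x ⊆ S := by
      intro z hz
      rcases eq_or_lt_of_le hz.1 with h1 | h1
      · exact h1 ▸ hfa
      · exact hsub (hAIoo ▸ (⟨h1, lt_of_le_of_lt hz.2 hxab.2⟩ : z ∈ Set.Ioo a b))
    have : a ∈ A := (isPreconnected_Icc.subset_connectedComponentIn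
      (Set.right_mem_Icc.2 hxab.1.le) this) (Set.left_mem_Icc.2 hxab.1.le)
    exact lt_irrefl a (hAIoo ▸ this).1
  · by_contra hfb
    have : Set.Icc x b ⊆ S := by
      intro z hz
      rcases eq_or_lt_of_le hz.2 with h1 | h1
      · exact h1 ▸ hfb
      · exact hsub (hAIoo ▸ (⟨lt_of_lt_of_le hxab.1 hz.1, h1⟩ : z ∈ Set.Ioo a b))
    have : b ∈ A := (isPreconnected_Icc.subset_connectedComponentIn
      (Set.left_mem_Icc.2 hxab.2.le) this) (Set.right_mem_Icc.2 hxab.2.le)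
    exact lt_irrefl b (hAIoo ▸ this).2


lemma locallyAffineAt_eventually {f : ℝ → ℝ} {x : ℝ} (h : LocallyAffineAt f x) :
    ∃ m b : ℝ, ∀ᶠ y in nhds x, f y = m * y + b := by
  obtain ⟨ε, hε, m, b, hy⟩ := h
  refine ⟨m, b, ?_⟩
  have : Metric.ball x ε ∈ nhds x := Metric.ball_mem_nhds x hε
  filter_upwards [this] with y hy'
  rw [Real.ball_eq_Ioo, Set.mem_Ioo] at hy'
  exact hy y (abs_sub_lt_iff.2 ⟨by linarith [hy'.1, hy'.2], by linarith [hy'.1, hy'.2]⟩)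

lemma affine_eq_of_eventually {m b m' b' x : ℝ} {f : ℝ → ℝ}
    (h1 : ∀ᶠ y in nhds x, f y = m * y + b) (h2 : ∀ᶠ y in nhds x, f y = m' * y + b') :
    m = m' ∧ b = b' := by
  obtain ⟨ε, hε, hball⟩ := Metric.eventually_nhds_iff_ball.1 (h1.and h2)
  have e1 := hball x (Metric.mem_ball_self hε)
  have e2 := hball (x + ε/2) (by
    rw [Metric.mem_ball, Real.dist_eq]
    have h' : x + ε/2 - x = ε/2 := by ring
    rw [h', abs_of_pos (by linarith)]; linarith)
  have h3 : m * (x + ε/2) + b = m' * (x + ε/2) + b' := e2.1 ▸ e2.2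
  have h4 : m * x + b = m' * x + b' := e1.1 ▸ e1.2
  have he : m * (ε/2) = m' * (ε/2) := by linear_combination h3 - h4
  have hm : m = m' := mul_right_cancel₀ (by positivity) he
  refine ⟨hm, ?_⟩
  rw [hm] at h4; linarith

lemma affine_on_Ioo {f : ℝ → ℝ} {u v : ℝ} (huv : u < v)
    (h : ∀ x ∈ Set.Ioo u v, LocallyAffineAt f x) :
    ∃ m b : ℝ, ∀ x ∈ Set.Ioo u v, f x = m * x + b := by
  have hx₀ : (u+v)/2 ∈ Set.Ioo u v := ⟨by linarith, by linarith⟩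
  obtain ⟨m, b, hmb⟩ := locallyAffineAt_eventually (h _ hx₀)
  set U : Set ℝ := {x | ∀ᶠ y in nhds x, f y = m * y + b} with hU
  set V : Set ℝ := {x | ∃ m' b' : ℝ, ¬(m' = m ∧ b' = b) ∧ ∀ᶠ y in nhds x, f y = m' * y + b'} with hV
  have hUopen : IsOpen U := isOpen_setOf_eventually_nhds
  have hVopen : IsOpen V := by
    rw [isOpen_iff_mem_nhds]
    intro x hx
    obtain ⟨m', b', hne, hev⟩ := hx
    filter_upwards [hev.eventually_nhds] with y hy
    exact ⟨m', b', hne, hy⟩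
  have hcover : Set.Ioo u v ⊆ U ∪ V := by
    intro x hx
    obtain ⟨m', b', hev⟩ := locallyAffineAt_eventually (h x hx)
    by_cases hc : m' = m ∧ b' = b
    · left; rw [hc.1, hc.2] at hev; exact hev
    · right; exact ⟨m', b', hc, hev⟩
  have hdisj : ¬ (Set.Ioo u v ∩ (U ∩ V)).Nonempty := by
    rintro ⟨x, -, hxU, m', b', hne, hev⟩
    exact hne ⟨(affine_eq_of_eventually hev hxU).1, (affine_eq_of_eventually hev hxU).2⟩
  have hIU : (Set.Ioo u v ∩ U).Nonempty := ⟨(u+v)/2, hx₀, hmb⟩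
  have hV_empty : ¬ (Set.Ioo u v ∩ V).Nonempty := by
    intro hIV
    exact hdisj (isPreconnected_Ioo U V hUopen hVopen hcover hIU hIV)
  refine ⟨m, b, fun x hx => ?_⟩
  rcases hcover hx with hxU | hxV
  · exact hxU.self_of_nhds
  · exact absurd ⟨x, hx, hxV⟩ hV_empty


lemma pl_affine_left {f : Equiv.Perm ℝ} (hf : PLHomeo f) {c : ℝ} (hc : f c = c) :
    ∃ δ > 0, ∃ m > 0, ∀ x ∈ Set.Ioc (c - δ) c, f x = c + m * (x - c) := by
  classical
  have hfin := hf.2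
  obtain ⟨δ₀, hδ₀, hgood⟩ : ∃ δ > 0, ∀ y ∈ Set.Ioo (c - δ) c, LocallyAffineAt f y := by
    set F := hfin.toFinset with hF
    by_cases hne : (F.filter (· < c)).Nonempty
    · set M := (F.filter (· < c)).max' hne with hMdef
      have hMc : M < c := by
        have hmem := (F.filter (· < c)).max'_mem hne
        exact (Finset.mem_filter.1 hmem).2
      refine ⟨c - M, by linarith, fun y hy => ?_⟩
      by_contra hbad
      have hyF : y ∈ F.filter (· < c) :=
        Finset.mem_filter.2 ⟨(Set.Finite.mem_toFinset hfin).2 hbad, hy.2⟩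
      have := (F.filter (· < c)).le_max' y hyF
      have h2 := hy.1
      simp only [← hMdef] at this
      linarith
    · refine ⟨1, one_pos, fun y hy => ?_⟩
      by_contra hbad
      exact hne ⟨y, Finset.mem_filter.2 ⟨(Set.Finite.mem_toFinset hfin).2 hbad, hy.2⟩⟩
  obtain ⟨m, b, hmb⟩ := affine_on_Ioo (by linarith : c - δ₀ < c) hgood
  have hcb : c = m * c + b := by
    have h1 : Filter.Tendsto f (nhdsWithin c (Set.Iio c)) (nhds c) := by
      have := (hf.1.cont.continuousAt (x := c)).tendsto
      rw [hc] at this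
      exact this.mono_left nhdsWithin_le_nhds
    have h2 : Filter.Tendsto (fun y => m * y + b) (nhdsWithin c (Set.Iio c)) (nhds (m * c + b)) :=
      (((continuous_const.mul continuous_id).add continuous_const).continuousAt).tendsto.mono_left
        nhdsWithin_le_nhds
    have heq : f =ᶠ[nhdsWithin c (Set.Iio c)] fun y => m * y + b := by
      filter_upwards [Ioo_mem_nhdsLT (by linarith : c - δ₀ < c)] with y hy
      exact hmb y hy
    exact tendsto_nhds_unique (h2.congr' heq.symm) h1 |>.symm
  have hform : ∀ x ∈ Set.Ioc (c - δ₀) c, f x = c + m * (x - c) := by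
    intro x hx
    rcases eq_or_lt_of_le hx.2 with h1 | h1
    · rw [h1, hc]; ring
    · have := hmb x ⟨hx.1, h1⟩
      rw [this]; linear_combination -hcb
  have hm : 0 < m := by
    have hx : c - δ₀/2 ∈ Set.Ioc (c - δ₀) c := ⟨by linarith, by linarith⟩
    have h1 := hform _ hx
    have h2 : f (c - δ₀/2) < c := by
      calc f (c - δ₀/2) < f c := hf.1.1 (by linarith)
      _ = c := hc
    nlinarith [h1, h2]
  exact ⟨δ₀, hδ₀, m, hm, hform⟩

lemma pl_affine_right {f : Equiv.Perm ℝ} (hf : PLHomeo f) {c : ℝ} (hc : f c = c) :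
    ∃ δ > 0, ∃ m > 0, ∀ x ∈ Set.Ico c (c + δ), f x = c + m * (x - c) := by
  classical
  have hfin := hf.2
  obtain ⟨δ₀, hδ₀, hgood⟩ : ∃ δ > 0, ∀ y ∈ Set.Ioo c (c + δ), LocallyAffineAt f y := by
    set F := hfin.toFinset with hF
    by_cases hne : (F.filter (c < ·)).Nonempty
    · set M := (F.filter (c < ·)).min' hne with hMdef
      have hMc : c < M := by
        have hmem := (F.filter (c < ·)).min'_mem hne
        exact (Finset.mem_filter.1 hmem).2
      refine ⟨M - c, by linarith, fun y hy => ?_⟩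
      by_contra hbad
      have hyF : y ∈ F.filter (c < ·) :=
        Finset.mem_filter.2 ⟨(Set.Finite.mem_toFinset hfin).2 hbad, hy.1⟩
      have := (F.filter (c < ·)).min'_le y hyF
      have h2 := hy.2
      simp only [← hMdef] at this
      linarith
    · refine ⟨1, one_pos, fun y hy => ?_⟩
      by_contra hbad
      exact hne ⟨y, Finset.mem_filter.2 ⟨(Set.Finite.mem_toFinset hfin).2 hbad, hy.1⟩⟩
  obtain ⟨m, b, hmb⟩ := affine_on_Ioo (by linarith : c < c + δ₀) hgood
  have hcb : c = m * c + b := by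
    have h1 : Filter.Tendsto f (nhdsWithin c (Set.Ioi c)) (nhds c) := by
      have := (hf.1.cont.continuousAt (x := c)).tendsto
      rw [hc] at this
      exact this.mono_left nhdsWithin_le_nhds
    have h2 : Filter.Tendsto (fun y => m * y + b) (nhdsWithin c (Set.Ioi c)) (nhds (m * c + b)) :=
      (((continuous_const.mul continuous_id).add continuous_const).continuousAt).tendsto.mono_left
        nhdsWithin_le_nhds
    have heq : f =ᶠ[nhdsWithin c (Set.Ioi c)] fun y => m * y + b := by
      filter_upwards [Ioo_mem_nhdsGT (by linarith : c < c + δ₀)] with y hy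
      exact hmb y hy
    exact tendsto_nhds_unique (h2.congr' heq.symm) h1 |>.symm
  have hform : ∀ x ∈ Set.Ico c (c + δ₀), f x = c + m * (x - c) := by
    intro x hx
    rcases eq_or_lt_of_le hx.1 with h1 | h1
    · rw [← h1, hc]; ring
    · have := hmb x ⟨h1, hx.2⟩
      rw [this]; linear_combination -hcb
  have hm : 0 < m := by
    have hx : c + δ₀/2 ∈ Set.Ico c (c + δ₀) := ⟨by linarith, by linarith⟩
    have h1 := hform _ hx
    have h2 : c < f (c + δ₀/2) := by
      calc c = f c := hc.symm
      _ < f (c + δ₀/2) := hf.1.1 (by linarith)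
    nlinarith [h1, h2]
  exact ⟨δ₀, hδ₀, m, hm, hform⟩

lemma slope_inv_left {f : Equiv.Perm ℝ} {c δ₁ δ₂ m₁ m₂ : ℝ} (hδ₁ : 0 < δ₁) (hδ₂ : 0 < δ₂)
    (hm₂ : 0 < m₂)
    (h1 : ∀ x ∈ Set.Ioc (c - δ₁) c, f x = c + m₁ * (x - c))
    (h2 : ∀ x ∈ Set.Ioc (c - δ₂) c, f⁻¹ x = c + m₂ * (x - c)) :
    m₁ * m₂ = 1 := by
  obtain ⟨η, hηpos, hηδ₂, h5⟩ : ∃ η, 0 < η ∧ η ≤ δ₂ ∧ m₂ * η ≤ δ₁ := by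
    refine ⟨min δ₂ (δ₁ / m₂), lt_min hδ₂ (by positivity), min_le_left _ _, ?_⟩
    have := mul_le_mul_of_nonneg_left (min_le_right δ₂ (δ₁ / m₂)) hm₂.le
    rwa [mul_div_cancel₀ _ (ne_of_gt hm₂)] at this
  have hx2 : c - η/2 ∈ Set.Ioc (c - δ₂) c := ⟨by linarith, by linarith⟩
  have hfx : f⁻¹ (c - η/2) = c + m₂ * ((c - η/2) - c) := h2 _ hx2
  have hmpos : 0 < m₂ * (η/2) := mul_pos hm₂ (by linarith)
  have hmem : f⁻¹ (c - η/2) ∈ Set.Ioc (c - δ₁) c := by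
    rw [hfx]
    constructor
    · nlinarith
    · nlinarith
  have happ : f (f⁻¹ (c - η/2)) = c + m₁ * (f⁻¹ (c - η/2) - c) := h1 _ hmem
  rw [Equiv.Perm.apply_inv_self, hfx] at happ
  have h6 : (m₁ * m₂ - 1) * η = 0 := by linear_combination 2 * happ
  have := (mul_eq_zero.1 h6).resolve_right (ne_of_gt hηpos)
  linarith

lemma slope_inv_right {f : Equiv.Perm ℝ} {c δ₁ δ₂ m₁ m₂ : ℝ} (hδ₁ : 0 < δ₁) (hδ₂ : 0 < δ₂)
    (hm₂ : 0 < m₂)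
    (h1 : ∀ x ∈ Set.Ico c (c + δ₁), f x = c + m₁ * (x - c))
    (h2 : ∀ x ∈ Set.Ico c (c + δ₂), f⁻¹ x = c + m₂ * (x - c)) :
    m₁ * m₂ = 1 := by
  obtain ⟨η, hηpos, hηδ₂, h5⟩ : ∃ η, 0 < η ∧ η ≤ δ₂ ∧ m₂ * η ≤ δ₁ := by
    refine ⟨min δ₂ (δ₁ / m₂), lt_min hδ₂ (by positivity), min_le_left _ _, ?_⟩
    have := mul_le_mul_of_nonneg_left (min_le_right δ₂ (δ₁ / m₂)) hm₂.le
    rwa [mul_div_cancel₀ _ (ne_of_gt hm₂)] at this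
  have hx2 : c + η/2 ∈ Set.Ico c (c + δ₂) := ⟨by linarith, by linarith⟩
  have hfx : f⁻¹ (c + η/2) = c + m₂ * ((c + η/2) - c) := h2 _ hx2
  have hmpos : 0 < m₂ * (η/2) := mul_pos hm₂ (by linarith)
  have hmem : f⁻¹ (c + η/2) ∈ Set.Ico c (c + δ₁) := by
    rw [hfx]
    constructor
    · nlinarith
    · nlinarith
  have happ : f (f⁻¹ (c + η/2)) = c + m₁ * (f⁻¹ (c + η/2) - c) := h1 _ hmem
  rw [Equiv.Perm.apply_inv_self, hfx] at happ
  have h6 : (m₁ * m₂ - 1) * η = 0 := by linear_combination -2 * happ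
  have := (mul_eq_zero.1 h6).resolve_right (ne_of_gt hηpos)
  linarith

set_option maxHeartbeats 2000000 in
lemma commutator_id_left {f₁ f₂ : Equiv.Perm ℝ} (h₁ : PLHomeo f₁) (h₂ : PLHomeo f₂)
    (h₁' : PLHomeo f₁⁻¹) (h₂' : PLHomeo f₂⁻¹) {c : ℝ} (hc₁ : f₁ c = c) (hc₂ : f₂ c = c) :
    ∃ ε > 0, ∀ x ∈ Set.Ioo (c - ε) c, (f₁ * f₂ * f₁⁻¹ * f₂⁻¹) x = x := by
  obtain ⟨δ₁, hδ₁, m₁, hm₁, H₁⟩ := pl_affine_left h₁ hc₁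
  obtain ⟨δ₂, hδ₂, m₂, hm₂, H₂⟩ := pl_affine_left h₂ hc₂
  obtain ⟨δ₃, hδ₃, m₃, hm₃, H₃⟩ := pl_affine_left h₁' (inv_fix hc₁)
  obtain ⟨δ₄, hδ₄, m₄, hm₄, H₄⟩ := pl_affine_left h₂' (inv_fix hc₂)
  have k13 : m₁ * m₃ = 1 := slope_inv_left hδ₁ hδ₃ hm₃ H₁ H₃
  have k24 : m₂ * m₄ = 1 := slope_inv_left hδ₂ hδ₄ hm₄ H₂ H₄
  obtain ⟨M, hM1, hM2, hM3, hM4⟩ : ∃ M : ℝ, 1 ≤ M ∧ m₂ ≤ M ∧ m₃ ≤ M ∧ m₄ ≤ M :=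
    ⟨max 1 (max m₂ (max m₃ m₄)), le_max_left _ _,
      le_trans (le_max_left _ _) (le_max_right _ _),
      le_trans (le_trans (le_max_left _ _) (le_max_right _ _)) (le_max_right _ _),
      le_trans (le_trans (le_max_right _ _) (le_max_right _ _)) (le_max_right _ _)⟩
  have hMpos : 0 < M := lt_of_lt_of_le one_pos hM1
  obtain ⟨D, hDpos, hD1, hD2, hD3, hD4⟩ :
      ∃ D : ℝ, 0 < D ∧ D ≤ δ₁ ∧ D ≤ δ₂ ∧ D ≤ δ₃ ∧ D ≤ δ₄ :=
    ⟨min (min δ₁ δ₂) (min δ₃ δ₄), lt_min (lt_min hδ₁ hδ₂) (lt_min hδ₃ hδ₄),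
      le_trans (min_le_left _ _) (min_le_left _ _),
      le_trans (min_le_left _ _) (min_le_right _ _),
      le_trans (min_le_right _ _) (min_le_left _ _),
      le_trans (min_le_right _ _) (min_le_right _ _)⟩
  refine ⟨D / (M * M * M), by positivity, ?_⟩
  intro x hx
  have hεdef : (D / (M * M * M)) * (M * M * M) = D := by field_simp
  have hεpos : 0 < D / (M * M * M) := by positivity
  set ε := D / (M * M * M) with hεeq
  have hMM : 1 ≤ M * M := by nlinarith
  have hMMM : 1 ≤ M * M * M := by nlinarith
  have hq1 : ε ≤ D := by nlinarith
  have hq2 : M * ε ≤ D := by nlinarith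
  have hq3 : M * (M * ε) ≤ D := by nlinarith
  have hxl : c - ε < x := hx.1
  have hxu : x ≤ c := hx.2.le
  have hx4 : x ∈ Set.Ioc (c - δ₄) c := ⟨by linarith, hxu⟩
  have E4 : f₂⁻¹ x = c + m₄ * (x - c) := H₄ x hx4
  have hy4l : c - M * ε < f₂⁻¹ x := by rw [E4]; nlinarith
  have hy4u : f₂⁻¹ x ≤ c := by rw [E4]; nlinarith
  have hx3 : f₂⁻¹ x ∈ Set.Ioc (c - δ₃) c := ⟨by linarith, hy4u⟩
  have E3 : f₁⁻¹ (f₂⁻¹ x) = c + m₃ * (f₂⁻¹ x - c) := H₃ _ hx3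
  have hy3l : c - M * (M * ε) < f₁⁻¹ (f₂⁻¹ x) := by rw [E3]; nlinarith
  have hy3u : f₁⁻¹ (f₂⁻¹ x) ≤ c := by rw [E3]; nlinarith
  have hx2 : f₁⁻¹ (f₂⁻¹ x) ∈ Set.Ioc (c - δ₂) c := ⟨by linarith, hy3u⟩
  have E2 : f₂ (f₁⁻¹ (f₂⁻¹ x)) = c + m₂ * (f₁⁻¹ (f₂⁻¹ x) - c) := H₂ _ hx2
  have hy2l : c - M * (M * (M * ε)) < f₂ (f₁⁻¹ (f₂⁻¹ x)) := by rw [E2]; nlinarith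
  have hy2u : f₂ (f₁⁻¹ (f₂⁻¹ x)) ≤ c := by rw [E2]; nlinarith
  have hMq : M * (M * (M * ε)) = D := by rw [← hεdef]; ring
  have hx1 : f₂ (f₁⁻¹ (f₂⁻¹ x)) ∈ Set.Ioc (c - δ₁) c := ⟨by rw [← hMq] at hD1; linarith, hy2u⟩
  have E1 : f₁ (f₂ (f₁⁻¹ (f₂⁻¹ x))) = c + m₁ * (f₂ (f₁⁻¹ (f₂⁻¹ x)) - c) := H₁ _ hx1
  simp only [Equiv.Perm.mul_apply]
  rw [E1, E2, E3, E4]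
  linear_combination (m₂ * m₄ * (x - c)) * k13 + (x - c) * k24

set_option maxHeartbeats 2000000 in
lemma commutator_id_right {f₁ f₂ : Equiv.Perm ℝ} (h₁ : PLHomeo f₁) (h₂ : PLHomeo f₂)
    (h₁' : PLHomeo f₁⁻¹) (h₂' : PLHomeo f₂⁻¹) {c : ℝ} (hc₁ : f₁ c = c) (hc₂ : f₂ c = c) :
    ∃ ε > 0, ∀ x ∈ Set.Ioo c (c + ε), (f₁ * f₂ * f₁⁻¹ * f₂⁻¹) x = x := by
  obtain ⟨δ₁, hδ₁, m₁, hm₁, H₁⟩ := pl_affine_right h₁ hc₁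
  obtain ⟨δ₂, hδ₂, m₂, hm₂, H₂⟩ := pl_affine_right h₂ hc₂
  obtain ⟨δ₃, hδ₃, m₃, hm₃, H₃⟩ := pl_affine_right h₁' (inv_fix hc₁)
  obtain ⟨δ₄, hδ₄, m₄, hm₄, H₄⟩ := pl_affine_right h₂' (inv_fix hc₂)
  have k13 : m₁ * m₃ = 1 := slope_inv_right hδ₁ hδ₃ hm₃ H₁ H₃
  have k24 : m₂ * m₄ = 1 := slope_inv_right hδ₂ hδ₄ hm₄ H₂ H₄
  obtain ⟨M, hM1, hM2, hM3, hM4⟩ : ∃ M : ℝ, 1 ≤ M ∧ m₂ ≤ M ∧ m₃ ≤ M ∧ m₄ ≤ M :=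
    ⟨max 1 (max m₂ (max m₃ m₄)), le_max_left _ _,
      le_trans (le_max_left _ _) (le_max_right _ _),
      le_trans (le_trans (le_max_left _ _) (le_max_right _ _)) (le_max_right _ _),
      le_trans (le_trans (le_max_right _ _) (le_max_right _ _)) (le_max_right _ _)⟩
  have hMpos : 0 < M := lt_of_lt_of_le one_pos hM1
  obtain ⟨D, hDpos, hD1, hD2, hD3, hD4⟩ :
      ∃ D : ℝ, 0 < D ∧ D ≤ δ₁ ∧ D ≤ δ₂ ∧ D ≤ δ₃ ∧ D ≤ δ₄ :=
    ⟨min (min δ₁ δ₂) (min δ₃ δ₄), lt_min (lt_min hδ₁ hδ₂) (lt_min hδ₃ hδ₄),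
      le_trans (min_le_left _ _) (min_le_left _ _),
      le_trans (min_le_left _ _) (min_le_right _ _),
      le_trans (min_le_right _ _) (min_le_left _ _),
      le_trans (min_le_right _ _) (min_le_right _ _)⟩
  refine ⟨D / (M * M * M), by positivity, ?_⟩
  intro x hx
  have hεdef : (D / (M * M * M)) * (M * M * M) = D := by field_simp
  have hεpos : 0 < D / (M * M * M) := by positivity
  set ε := D / (M * M * M) with hεeq
  have hMM : 1 ≤ M * M := by nlinarith
  have hMMM : 1 ≤ M * M * M := by nlinarith
  have hq1 : ε ≤ D := by nlinarith
  have hq2 : M * ε ≤ D := by nlinarith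
  have hq3 : M * (M * ε) ≤ D := by nlinarith
  have hxl : c ≤ x := hx.1.le
  have hxu : x < c + ε := hx.2
  have hx4 : x ∈ Set.Ico c (c + δ₄) := ⟨hxl, by linarith⟩
  have E4 : f₂⁻¹ x = c + m₄ * (x - c) := H₄ x hx4
  have hy4l : f₂⁻¹ x < c + M * ε := by rw [E4]; nlinarith
  have hy4u : c ≤ f₂⁻¹ x := by rw [E4]; nlinarith
  have hx3 : f₂⁻¹ x ∈ Set.Ico c (c + δ₃) := ⟨hy4u, by linarith⟩
  have E3 : f₁⁻¹ (f₂⁻¹ x) = c + m₃ * (f₂⁻¹ x - c) := H₃ _ hx3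
  have hy3l : f₁⁻¹ (f₂⁻¹ x) < c + M * (M * ε) := by rw [E3]; nlinarith
  have hy3u : c ≤ f₁⁻¹ (f₂⁻¹ x) := by rw [E3]; nlinarith
  have hx2 : f₁⁻¹ (f₂⁻¹ x) ∈ Set.Ico c (c + δ₂) := ⟨hy3u, by linarith⟩
  have E2 : f₂ (f₁⁻¹ (f₂⁻¹ x)) = c + m₂ * (f₁⁻¹ (f₂⁻¹ x) - c) := H₂ _ hx2
  have hy2l : f₂ (f₁⁻¹ (f₂⁻¹ x)) < c + M * (M * (M * ε)) := by rw [E2]; nlinarith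
  have hy2u : c ≤ f₂ (f₁⁻¹ (f₂⁻¹ x)) := by rw [E2]; nlinarith
  have hMq : M * (M * (M * ε)) = D := by rw [← hεdef]; ring
  have hx1 : f₂ (f₁⁻¹ (f₂⁻¹ x)) ∈ Set.Ico c (c + δ₁) := ⟨hy2u, by rw [← hMq] at hD1; linarith⟩
  have E1 : f₁ (f₂ (f₁⁻¹ (f₂⁻¹ x))) = c + m₁ * (f₂ (f₁⁻¹ (f₂⁻¹ x)) - c) := H₁ _ hx1
  simp only [Equiv.Perm.mul_apply]
  rw [E1, E2, E3, E4]
  linear_combination (m₂ * m₄ * (x - c)) * k13 + (x - c) * k24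


lemma no_shared_right {G : Subgroup (Equiv.Perm ℝ)} (hG : ∀ g ∈ G, PLHomeo g)
    (hnc : ¬ HasTransitionChain2 G) {g h : Equiv.Perm ℝ} (hg : g ∈ G) (hh : h ∈ G)
    {a₁ b₁ c : ℝ} (hab : a₁ < b₁) (hbc : b₁ < c)
    (hA : IsOrbital ⇑g (Set.Ioo a₁ c)) (hB : IsOrbital ⇑h (Set.Ioo b₁ c)) : False := by
  have hgPL := hG g hg
  have hhPL := hG h hh
  obtain ⟨a', c', hac', hAeq, hAsub, hga', hgc'⟩ := orbital_shape hgPL.1 hA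
  obtain ⟨haa, hcc⟩ := Ioo_eq_Ioo (lt_trans hab hbc) hAeq
  subst haa; subst hcc
  obtain ⟨b'', c'', hbc'', hBeq, hBsub, hhb', hhc'⟩ := orbital_shape hhPL.1 hB
  obtain ⟨hbb, hcc2⟩ := Ioo_eq_Ioo hbc hBeq
  subst hbb; subst hcc2
  have hbSuppg : ⇑g b₁ ≠ b₁ := hAsub ⟨hab, hbc⟩
  obtain ⟨k, hkG, hkb, hkc⟩ : ∃ k : Equiv.Perm ℝ, k ∈ G ∧ k b₁ < b₁ ∧ k c = c := by
    rcases lt_or_gt_of_ne hbSuppg with hlt | hgt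
    · exact ⟨g, hg, hlt, hgc'⟩
    · refine ⟨g⁻¹, inv_mem hg, ?_, inv_fix hgc'⟩
      have h1 : g (g⁻¹ b₁) < g b₁ := by rw [Equiv.Perm.apply_inv_self]; exact hgt
      exact hgPL.1.1.lt_iff_lt.1 h1
  have hkPL := hG k hkG
  have hkinvPL := hG k⁻¹ (inv_mem hkG)
  set q : Equiv.Perm ℝ := k * h * k⁻¹ * h⁻¹ with hqdef
  have hqG : q ∈ G := mul_mem (mul_mem (mul_mem hkG hh) (inv_mem hkG)) (inv_mem hh)
  have hy1 : b₁ < k⁻¹ b₁ := by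
    have h1 : k b₁ < k (k⁻¹ b₁) := by rw [Equiv.Perm.apply_inv_self]; exact hkb
    exact hkPL.1.1.lt_iff_lt.1 h1
  have hy2 : k⁻¹ b₁ < c := by
    have h1 : k (k⁻¹ b₁) < k c := by rw [Equiv.Perm.apply_inv_self, hkc]; exact hbc
    exact hkPL.1.1.lt_iff_lt.1 h1
  have hySupp : ⇑h (k⁻¹ b₁) ≠ k⁻¹ b₁ := hBsub ⟨hy1, hy2⟩
  have hqb : ⇑q b₁ ≠ b₁ := by
    simp only [hqdef, Equiv.Perm.mul_apply]
    rw [inv_fix hhb']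
    intro hcon
    apply hySupp
    apply k.injective
    rw [Equiv.Perm.apply_inv_self]
    exact hcon
  obtain ⟨ε, hε, hid⟩ :=
    commutator_id_left hkPL hhPL hkinvPL (hG h⁻¹ (inv_mem hh)) hkc hhc'
  have hqPL := hG q hqG
  have hbSuppq : b₁ ∈ Supp ⇑q := hqb
  have hE : IsOrbital ⇑q (connectedComponentIn (Supp ⇑q) b₁) := ⟨b₁, hbSuppq, rfl⟩
  obtain ⟨e₁, e₂, he12, hEeq, hEsub, hqe₁, hqe₂⟩ := orbital_shape hqPL.1 hE
  have hbE : b₁ ∈ Set.Ioo e₁ e₂ := hEeq ▸ mem_connectedComponentIn hbSuppq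
  have hb₁le : b₁ ≤ c - ε := by
    by_contra hcon
    push_neg at hcon
    exact hqb (hid b₁ ⟨hcon, hbc⟩)
  have he₂ : e₂ ≤ c - ε := by
    by_contra hcon
    push_neg at hcon
    set y₀ := (c - ε + min e₂ c) / 2 with hy₀
    have hm1 : c - ε < min e₂ c := lt_min hcon (by linarith)
    have hy₀1 : c - ε < y₀ := by rw [hy₀]; linarith
    have hy₀2 : y₀ < min e₂ c := by rw [hy₀]; linarith
    have hy₀E : y₀ ∈ Set.Ioo e₁ e₂ :=
      ⟨lt_trans (lt_of_lt_of_le hbE.1 hb₁le) hy₀1, lt_of_lt_of_le hy₀2 (min_le_left _ _)⟩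
    have : ⇑q y₀ ≠ y₀ := hEsub (hEeq ▸ hy₀E)
    exact this (hid y₀ ⟨hy₀1, lt_of_lt_of_le hy₀2 (min_le_right _ _)⟩)
  exact hnc ⟨q, hqG, h, hh, e₁, b₁, e₂, c, hEeq ▸ hE, hB, hbE.1, hbE.2,
    lt_of_le_of_lt he₂ (by linarith)⟩

lemma no_shared_left {G : Subgroup (Equiv.Perm ℝ)} (hG : ∀ g ∈ G, PLHomeo g)
    (hnc : ¬ HasTransitionChain2 G) {g h : Equiv.Perm ℝ} (hg : g ∈ G) (hh : h ∈ G)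
    {c a₂ b₂ : ℝ} (hca : c < a₂) (hab : a₂ < b₂)
    (hA : IsOrbital ⇑g (Set.Ioo c a₂)) (hB : IsOrbital ⇑h (Set.Ioo c b₂)) : False := by
  have hgPL := hG g hg
  have hhPL := hG h hh
  obtain ⟨a', c', hac', hAeq, hAsub, hgc', hga'⟩ := orbital_shape hgPL.1 hA
  obtain ⟨haa, hcc⟩ := Ioo_eq_Ioo hca hAeq
  subst haa; subst hcc
  obtain ⟨b'', c'', hbc'', hBeq, hBsub, hhc', hhb'⟩ := orbital_shape hhPL.1 hB
  obtain ⟨hbb, hcc2⟩ := Ioo_eq_Ioo (lt_trans hca hab) hBeq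
  subst hbb; subst hcc2
  have haSupph : ⇑h a₂ ≠ a₂ := hBsub ⟨hca, hab⟩
  obtain ⟨k, hkG, hka, hkc⟩ : ∃ k : Equiv.Perm ℝ, k ∈ G ∧ a₂ < k a₂ ∧ k c = c := by
    rcases lt_or_gt_of_ne haSupph with hlt | hgt
    · refine ⟨h⁻¹, inv_mem hh, ?_, inv_fix hhc'⟩
      have h1 : h a₂ < h (h⁻¹ a₂) := by rw [Equiv.Perm.apply_inv_self]; exact hlt
      exact hhPL.1.1.lt_iff_lt.1 h1
    · exact ⟨h, hh, hgt, hhc'⟩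
  have hkPL := hG k hkG
  have hkinvPL := hG k⁻¹ (inv_mem hkG)
  set q : Equiv.Perm ℝ := k * g * k⁻¹ * g⁻¹ with hqdef
  have hqG : q ∈ G := mul_mem (mul_mem (mul_mem hkG hg) (inv_mem hkG)) (inv_mem hg)
  have hy1 : k⁻¹ a₂ < a₂ := by
    have h1 : k (k⁻¹ a₂) < k a₂ := by rw [Equiv.Perm.apply_inv_self]; exact hka
    exact hkPL.1.1.lt_iff_lt.1 h1
  have hy2 : c < k⁻¹ a₂ := by
    have h1 : k c < k (k⁻¹ a₂) := by rw [Equiv.Perm.apply_inv_self, hkc]; exact hca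
    exact hkPL.1.1.lt_iff_lt.1 h1
  have hySupp : ⇑g (k⁻¹ a₂) ≠ k⁻¹ a₂ := hAsub ⟨hy2, hy1⟩
  have hqa : ⇑q a₂ ≠ a₂ := by
    simp only [hqdef, Equiv.Perm.mul_apply]
    rw [inv_fix hga']
    intro hcon
    apply hySupp
    apply k.injective
    rw [Equiv.Perm.apply_inv_self]
    exact hcon
  obtain ⟨ε, hε, hid⟩ :=
    commutator_id_right hkPL hgPL hkinvPL (hG g⁻¹ (inv_mem hg)) hkc hgc'
  have hqPL := hG q hqG
  have haSuppq : a₂ ∈ Supp ⇑q := hqa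
  have hE : IsOrbital ⇑q (connectedComponentIn (Supp ⇑q) a₂) := ⟨a₂, haSuppq, rfl⟩
  obtain ⟨e₁, e₂, he12, hEeq, hEsub, hqe₁, hqe₂⟩ := orbital_shape hqPL.1 hE
  have haE : a₂ ∈ Set.Ioo e₁ e₂ := hEeq ▸ mem_connectedComponentIn haSuppq
  have ha₂ge : c + ε ≤ a₂ := by
    by_contra hcon
    push_neg at hcon
    exact hqa (hid a₂ ⟨hca, hcon⟩)
  have he₁ : c + ε ≤ e₁ := by
    by_contra hcon
    push_neg at hcon
    set y₀ := (max e₁ c + (c + ε)) / 2 with hy₀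
    have hm1 : max e₁ c < c + ε := max_lt hcon (by linarith)
    have hy₀1 : max e₁ c < y₀ := by rw [hy₀]; linarith
    have hy₀2 : y₀ < c + ε := by rw [hy₀]; linarith
    have hy₀E : y₀ ∈ Set.Ioo e₁ e₂ :=
      ⟨lt_of_le_of_lt (le_max_left _ _) hy₀1,
        lt_of_lt_of_le hy₀2 (le_trans ha₂ge haE.2.le)⟩
    have : ⇑q y₀ ≠ y₀ := hEsub (hEeq ▸ hy₀E)
    exact this (hid y₀ ⟨lt_of_le_of_lt (le_max_right _ _) hy₀1, hy₀2⟩)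
  exact hnc ⟨g, hg, q, hqG, c, e₁, a₂, e₂, hA, hEeq ▸ hE,
    lt_of_lt_of_le (by linarith) he₁, haE.1, haE.2⟩


theorem stmt7 (G : Subgroup (Equiv.Perm ℝ)) (hG : ∀ g ∈ G, PLHomeo g)
    (hnc : ¬ HasTransitionChain2 G) {g h : Equiv.Perm ℝ} (hg : g ∈ G) (hh : h ∈ G)
    {A B : Set ℝ} (hA : IsOrbital ⇑g A) (hB : IsOrbital ⇑h B) (hAB : (A ∩ B).Nonempty) :
    closure A ⊆ B ∨ closure B ⊆ A ∨ A = B := by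
  obtain ⟨a₁, a₂, ha12, hAeq, hAsub, hga₁, hga₂⟩ := orbital_shape (hG g hg).1 hA
  obtain ⟨b₁, b₂, hb12, hBeq, hBsub, hhb₁, hhb₂⟩ := orbital_shape (hG h hh).1 hB
  obtain ⟨x₀, hx₀A, hx₀B⟩ := hAB
  rw [hAeq] at hx₀A
  rw [hBeq] at hx₀B
  have hba : b₁ < a₂ := lt_trans hx₀B.1 hx₀A.2
  have hab' : a₁ < b₂ := lt_trans hx₀A.1 hx₀B.2
  have hA' : IsOrbital ⇑g (Set.Ioo a₁ a₂) := hAeq ▸ hA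
  have hB' : IsOrbital ⇑h (Set.Ioo b₁ b₂) := hBeq ▸ hB
  rcases lt_trichotomy a₁ b₁ with h1 | h1 | h1 <;> rcases lt_trichotomy a₂ b₂ with h2 | h2 | h2
  · exact absurd ⟨g, hg, h, hh, a₁, b₁, a₂, b₂, hA', hB', h1, hba, h2⟩ hnc
  · exact absurd (no_shared_right hG hnc hg hh h1 (h2 ▸ hba) hA' (h2 ▸ hB')) not_false
  · refine Or.inr (Or.inl ?_)
    rw [hAeq, hBeq, closure_Ioo (ne_of_lt hb12)]
    intro z hz
    exact ⟨lt_of_lt_of_le h1 hz.1, lt_of_le_of_lt hz.2 h2⟩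
  · exact absurd (no_shared_left hG hnc hg hh (h1 ▸ ha12) h2 (h1 ▸ hA') (h1 ▸ hB')) not_false
  · exact Or.inr (Or.inr (by rw [hAeq, hBeq, h1, h2]))
  · exact absurd (no_shared_left hG hnc hh hg (h1 ▸ hb12) h2 (h1 ▸ hB') (h1 ▸ hA')) not_false
  · refine Or.inl ?_
    rw [hAeq, hBeq, closure_Ioo (ne_of_lt ha12)]
    intro z hz
    exact ⟨lt_of_lt_of_le h1 hz.1, lt_of_le_of_lt hz.2 h2⟩
  · exact absurd (no_shared_right hG hnc hh hg h1 (h2 ▸ hab') hB' (h2 ▸ hA')) not_false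
  · exact absurd ⟨h, hh, g, hg, b₁, a₁, b₂, a₂, hB', hA', h1, hab', h2⟩ hnc
end

section
/- If G is a subgroup of PL₊(I) that does not admit a transition chain of length two, then G is balanced: for every subgroup H ≤ G with orbital A, any element of H having an orbital sharing one end of A (and contained in A) also has an orbital contained in A sharing the other end of A. -/
open Set

lemma mem_ball_real {z w δ : ℝ} (h : |w - z| < δ) : w ∈ Metric.ball z δ := by
  rw [Metric.mem_ball, Real.dist_eq]; exact h

lemma cont_of_sm (f : Equiv.Perm ℝ) (hf : StrictMono ⇑f) : Continuous ⇑f := by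
  have := (StrictMono.orderIsoOfSurjective ⇑f hf f.surjective).toHomeomorph.continuous
  rwa [show ⇑(StrictMono.orderIsoOfSurjective ⇑f hf f.surjective).toHomeomorph = ⇑f from rfl] at this

lemma sm_inv (f : Equiv.Perm ℝ) (hf : StrictMono ⇑f) : StrictMono ⇑f⁻¹ := by
  intro x y hxy
  by_contra hc
  push_neg at hc
  have := hf.monotone hc
  simp only [(show ∀ (f : Equiv.Perm ℝ) (x : ℝ), f (f⁻¹ x) = x from fun f x => f.apply_symm_apply x)] at this
  exact absurd (lt_of_lt_of_le hxy this) (lt_irrefl _)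

lemma supp_open (f : Equiv.Perm ℝ) (hf : Continuous ⇑f) : IsOpen (Supp ⇑f) := by
  have : Supp ⇑f = {x | f x = x}ᶜ := rfl
  rw [this]
  exact (isClosed_eq hf continuous_id).isOpen_compl

lemma fix_of_not_supp {f : ℝ → ℝ} {x : ℝ} (h : x ∉ Supp f) : f x = x := not_not.mp h

/-- component of an open set containing a point, inside a bounded interval, is an open interval -/
lemma ccIn_eq_Ioo {S : Set ℝ} (hS : IsOpen S) {y : ℝ} (hy : y ∈ S) {a b : ℝ}
    (hsub : connectedComponentIn S y ⊆ Set.Ioo a b) :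
    ∃ p q : ℝ, p < y ∧ y < q ∧ a ≤ p ∧ q ≤ b ∧ connectedComponentIn S y = Set.Ioo p q := by
  set O := connectedComponentIn S y with hO
  have hyO : y ∈ O := mem_connectedComponentIn hy
  have hOopen : IsOpen O := hS.connectedComponentIn
  have hbdd : BddBelow O := ⟨a, fun z hz => (hsub hz).1.le⟩
  have hbdd' : BddAbove O := ⟨b, fun z hz => (hsub hz).2.le⟩
  have hne : O.Nonempty := ⟨y, hyO⟩
  set p := sInf O with hp
  set q := sSup O with hq
  have hord : OrdConnected O := isPreconnected_connectedComponentIn.ordConnected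
  have hOeq : O = Set.Ioo p q := by
    apply Set.eq_of_subset_of_subset
    · intro z hz
      rcases Metric.isOpen_iff.mp hOopen z hz with ⟨δ, hδ, hball⟩
      constructor
      · rcases lt_or_eq_of_le (csInf_le hbdd hz) with h' | h'
        · exact h'
        · exfalso
          have hz2 : z - δ/2 ∈ O := hball (mem_ball_real (by rw [abs_of_nonpos (by linarith)]; linarith))
          have := csInf_le hbdd hz2
          rw [← h'] at this; linarith
      · rcases lt_or_eq_of_le (le_csSup hbdd' hz) with h' | h'
        · exact h'
        · exfalso
          have hz2 : z + δ/2 ∈ O := hball (mem_ball_real (by rw [abs_of_nonneg (by linarith)]; linarith))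
          have := le_csSup hbdd' hz2
          rw [h'] at this; linarith
    · intro z hz
      obtain ⟨z1, hz1, hz1'⟩ := exists_lt_of_csInf_lt hne hz.1
      obtain ⟨z2, hz2, hz2'⟩ := exists_lt_of_lt_csSup hne hz.2
      exact hord.out hz1 hz2 ⟨hz1'.le, hz2'.le⟩
  refine ⟨p, q, ?_, ?_, ?_, ?_, hOeq⟩
  · exact (hOeq ▸ hyO).1
  · exact (hOeq ▸ hyO).2
  · exact le_csInf hne (fun z hz => (hsub hz).1.le)
  · exact csSup_le hne (fun z hz => (hsub hz).2.le)

/-- endpoints of an orbital are not in the (open) set -/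
lemma endpoints_not_mem {S : Set ℝ} (hS : IsOpen S) {x p q : ℝ} (hpq : p < q)
    (h : connectedComponentIn S x = Set.Ioo p q) : p ∉ S ∧ q ∉ S := by
  have hxS : x ∈ S := by
    by_contra hx
    rw [connectedComponentIn_eq_empty hx] at h
    exact (Set.nonempty_Ioo.mpr hpq).ne_empty h.symm
  have hxIoo : x ∈ Set.Ioo p q := h ▸ mem_connectedComponentIn hxS
  have key : ∀ w : ℝ, w ∈ S → (Set.Ioo (w - min 1 (q-p)/2) (w + min 1 (q-p)/2) ∩ S ⊆ Set.Ioo p q → False) → (∀ δ'' > (0:ℝ), δ'' ≤ min 1 (q-p)/2 → Set.Ioo (w - δ'') (w + δ'') ⊆ S → False) → True := fun _ _ _ _ => trivial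
  clear key
  have hmin : 0 < min 1 (q - p) := lt_min one_pos (by linarith)
  constructor
  · intro hpS
    rcases Metric.isOpen_iff.mp hS p hpS with ⟨δ, hδ, hball⟩
    set δ' := min δ (min 1 (q - p)) with hδ'
    have h1 : δ' ≤ δ := min_le_left _ _
    have h2 : δ' ≤ q - p := le_trans (min_le_right _ _) (min_le_right _ _)
    have hδ'pos : 0 < δ' := lt_min hδ hmin
    have hu : IsPreconnected (Set.Ioo p q ∪ Set.Ioo (p - δ') (p + δ')) := by
      refine IsPreconnected.union (p + δ'/2) ?_ ?_ isPreconnected_Ioo isPreconnected_Ioo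
      · exact Set.mem_Ioo.mpr ⟨by linarith, by linarith⟩
      · exact Set.mem_Ioo.mpr ⟨by linarith, by linarith⟩
    have hsub2 : (Set.Ioo p q ∪ Set.Ioo (p - δ') (p + δ')) ⊆ S := by
      apply Set.union_subset
      · rw [← h]; exact connectedComponentIn_subset S x
      · intro z hz
        exact hball (mem_ball_real (abs_lt.mpr ⟨by linarith [hz.1], by linarith [hz.2]⟩))
    have hcc := hu.subset_connectedComponentIn (Set.mem_union_left _ hxIoo) hsub2
    rw [h] at hcc
    have : p - δ'/2 ∈ Set.Ioo p q := hcc (Set.mem_union_right _ ⟨by linarith, by linarith⟩)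
    linarith [this.1]
  · intro hqS
    rcases Metric.isOpen_iff.mp hS q hqS with ⟨δ, hδ, hball⟩
    set δ' := min δ (min 1 (q - p)) with hδ'
    have h1 : δ' ≤ δ := min_le_left _ _
    have h2 : δ' ≤ q - p := le_trans (min_le_right _ _) (min_le_right _ _)
    have hδ'pos : 0 < δ' := lt_min hδ hmin
    have hu : IsPreconnected (Set.Ioo p q ∪ Set.Ioo (q - δ') (q + δ')) := by
      refine IsPreconnected.union (q - δ'/2) ?_ ?_ isPreconnected_Ioo isPreconnected_Ioo
      · exact Set.mem_Ioo.mpr ⟨by linarith, by linarith⟩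
      · exact Set.mem_Ioo.mpr ⟨by linarith, by linarith⟩
    have hsub2 : (Set.Ioo p q ∪ Set.Ioo (q - δ') (q + δ')) ⊆ S := by
      apply Set.union_subset
      · rw [← h]; exact connectedComponentIn_subset S x
      · intro z hz
        exact hball (mem_ball_real (abs_lt.mpr ⟨by linarith [hz.1], by linarith [hz.2]⟩))
    have hcc := hu.subset_connectedComponentIn (Set.mem_union_left _ hxIoo) hsub2
    rw [h] at hcc
    have : q + δ'/2 ∈ Set.Ioo p q := hcc (Set.mem_union_right _ ⟨by linarith, by linarith⟩)
    linarith [this.2]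

/-- around any point there is a punctured neighbourhood avoiding a finite set -/
lemma exists_gap {N : Set ℝ} (hN : N.Finite) (a : ℝ) :
    ∃ ε > 0, ∀ x : ℝ, x ≠ a → |x - a| < ε → x ∉ N := by
  set M := (fun x => |x - a|) '' (N \ {a}) with hM
  have hMfin : M.Finite := (hN.subset (Set.diff_subset)).image _
  rcases Set.eq_empty_or_nonempty M with hMe | hMne
  · refine ⟨1, one_pos, fun x hx h1 hxN => ?_⟩
    have : |x - a| ∈ M := ⟨x, ⟨hxN, hx⟩, rfl⟩
    rw [hMe] at this; exact this
  · obtain ⟨μ, hμM, hμmin⟩ := Set.exists_min_image M id hMfin hMne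
    obtain ⟨x0, hx0, hx0eq⟩ := hμM
    have hμpos : 0 < μ := by
      rw [← hx0eq]
      exact abs_pos.mpr (sub_ne_zero.mpr hx0.2)
    refine ⟨μ, hμpos, fun x hx h1 hxN => ?_⟩
    have : μ ≤ |x - a| := hμmin _ ⟨x, ⟨hxN, hx⟩, rfl⟩
    linarith

lemma affine_unique {m₁ b₁ m₂ b₂ y₁ y₂ : ℝ} (hne : y₁ ≠ y₂)
    (h1 : m₁ * y₁ + b₁ = m₂ * y₁ + b₂) (h2 : m₁ * y₂ + b₁ = m₂ * y₂ + b₂) :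
    m₁ = m₂ ∧ b₁ = b₂ := by
  have hm : m₁ = m₂ := by
    have : (m₁ - m₂) * (y₁ - y₂) = 0 := by linarith
    rcases mul_eq_zero.mp this with h | h
    · linarith
    · exact absurd (by linarith : y₁ = y₂) hne
  exact ⟨hm, by rw [hm] at h1; linarith⟩

/-- a function locally affine on an open interval is affine there -/
lemma affine_on_interval {f : ℝ → ℝ} {u v : ℝ} (huv : u < v)
    (hloc : ∀ x ∈ Set.Ioo u v, LocallyAffineAt f x) :
    ∃ m b : ℝ, ∀ x ∈ Set.Ioo u v, f x = m * x + b := by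
  set x₀ := (u + v) / 2 with hx₀
  have hx₀m : x₀ ∈ Set.Ioo u v := ⟨by simp [hx₀]; linarith, by simp [hx₀]; linarith⟩
  obtain ⟨δ₀, hδ₀, m, b, hrep⟩ := hloc x₀ hx₀m
  set U : Set ℝ := {x | ∃ δ > 0, ∀ y : ℝ, |y - x| < δ → f y = m * y + b} with hU
  set V : Set ℝ := {x | ∃ δ > 0, ∃ m' b' : ℝ, (m' ≠ m ∨ b' ≠ b) ∧ ∀ y : ℝ, |y - x| < δ → f y = m' * y + b'} with hV
  have hUopen : IsOpen U := by
    rw [Metric.isOpen_iff]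
    rintro x ⟨δ, hδ, hx⟩
    exact ⟨δ/2, by linarith, fun y hy => ⟨δ/2, by linarith, fun z hz => hx z (by
      rw [Metric.mem_ball, Real.dist_eq] at hy
      calc |z - x| = |(z - y) + (y - x)| := by ring_nf
        _ ≤ |z - y| + |y - x| := abs_add_le _ _
        _ < δ := by linarith)⟩⟩
  have hVopen : IsOpen V := by
    rw [Metric.isOpen_iff]
    rintro x ⟨δ, hδ, m', b', hne, hx⟩
    exact ⟨δ/2, by linarith, fun y hy => ⟨δ/2, by linarith, m', b', hne, fun z hz => hx z (by
      rw [Metric.mem_ball, Real.dist_eq] at hy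
      calc |z - x| = |(z - y) + (y - x)| := by ring_nf
        _ ≤ |z - y| + |y - x| := abs_add_le _ _
        _ < δ := by linarith)⟩⟩
  have hcover : Set.Ioo u v ⊆ U ∪ V := by
    intro x hx
    obtain ⟨δ, hδ, m', b', hr⟩ := hloc x hx
    by_cases hc : m' = m ∧ b' = b
    · left; exact ⟨δ, hδ, fun y hy => by rw [hr y hy, hc.1, hc.2]⟩
    · right
      refine ⟨δ, hδ, m', b', ?_, hr⟩
      by_contra hcc
      push_neg at hcc
      exact hc ⟨hcc.1, hcc.2⟩
  have hdisj : U ∩ V = ∅ := by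
    rw [Set.eq_empty_iff_forall_notMem]
    rintro x ⟨⟨δ₁, hδ₁, h1⟩, ⟨δ₂, hδ₂, m', b', hne, h2⟩⟩
    set δ := min δ₁ δ₂ with hδdef
    have hδpos : 0 < δ := lt_min hδ₁ hδ₂
    have e1 : m * x + b = m' * x + b' := by
      rw [← h1 x (by rw [sub_self, abs_zero]; exact lt_of_lt_of_le hδpos (min_le_left _ _)),
        h2 x (by rw [sub_self, abs_zero]; exact lt_of_lt_of_le hδpos (min_le_right _ _))]
    have e2 : m * (x + δ/2) + b = m' * (x + δ/2) + b' := by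
      rw [← h1 (x + δ/2) (by rw [show x + δ/2 - x = δ/2 by ring, abs_of_pos (by linarith)]; linarith [min_le_left δ₁ δ₂]),
        h2 (x + δ/2) (by rw [show x + δ/2 - x = δ/2 by ring, abs_of_pos (by linarith)]; linarith [min_le_right δ₁ δ₂])]
    obtain ⟨hm, hb⟩ := affine_unique (show x ≠ x + δ/2 by intro hc; linarith [hδpos]) e1 e2
    rcases hne with h | h
    · exact h hm.symm
    · exact h hb.symm
  have hUne : (Set.Ioo u v ∩ U).Nonempty := ⟨x₀, hx₀m, ⟨δ₀, hδ₀, hrep⟩⟩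
  have hVempty : Set.Ioo u v ∩ V = ∅ := by
    by_contra hc
    rw [← ne_eq, ← Set.nonempty_iff_ne_empty] at hc
    have := isPreconnected_Ioo (a := u) (b := v) U V hUopen hVopen hcover hUne hc
    obtain ⟨z, _, hzU, hzV⟩ := this
    rw [Set.eq_empty_iff_forall_notMem] at hdisj
    exact hdisj z ⟨hzU, hzV⟩
  refine ⟨m, b, fun x hx => ?_⟩
  have hxU : x ∈ U := by
    rcases hcover hx with h | h
    · exact h
    · exfalso; rw [Set.eq_empty_iff_forall_notMem] at hVempty; exact hVempty x ⟨hx, h⟩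
  obtain ⟨δ, hδ, hr⟩ := hxU
  exact hr x (by simpa using hδ)

/-- right germ of a PL bijection at a fixed point -/
lemma aff_right (f : Equiv.Perm ℝ) (hsm : StrictMono ⇑f) (hpl : IsPL ⇑f) {a : ℝ} (ha : f a = a) :
    ∃ ε > 0, ∃ m > 0, ∀ x ∈ Set.Ioo a (a + ε), f x = a + m * (x - a) := by
  obtain ⟨ε₁, hε₁, hgap⟩ := exists_gap hpl a
  have hloc : ∀ x ∈ Set.Ioo a (a + ε₁), LocallyAffineAt ⇑f x := by
    intro x hx
    have := hgap x (ne_of_gt hx.1) (by rw [abs_of_pos (by linarith [hx.1])]; linarith [hx.2])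
    simpa using not_not.mp (by simpa using this)
  obtain ⟨m, b, hrep⟩ := affine_on_interval (by linarith : a < a + ε₁) hloc
  have hx1 : a + ε₁/3 ∈ Set.Ioo a (a + ε₁) := ⟨by linarith, by linarith⟩
  have hx2 : a + ε₁/2 ∈ Set.Ioo a (a + ε₁) := ⟨by linarith, by linarith⟩
  have hmpos : 0 < m := by
    have hlt := hsm (show a + ε₁/3 < a + ε₁/2 by linarith)
    rw [hrep _ hx1, hrep _ hx2] at hlt
    nlinarith
  have hfix : m * a + b = a := by
    rcases lt_trichotomy (m * a + b) a with hlt | heq | hgt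
    · exfalso
      have hQpos : 0 < (a - (m*a+b))/m := div_pos (by linarith) hmpos
      obtain ⟨x, hxa, hxe, hxr⟩ : ∃ x : ℝ, a < x ∧ x < a + ε₁ ∧ x - a ≤ ((a - (m*a+b))/m)/2 := by
        refine ⟨a + min ε₁ ((a - (m*a+b))/m) / 2, ?_, ?_, ?_⟩
        · have := lt_min hε₁ hQpos; linarith
        · have := min_le_left ε₁ ((a - (m*a+b))/m); linarith
        · have := min_le_right ε₁ ((a - (m*a+b))/m); linarith
      have hfx : f x = m * x + b := hrep x ⟨hxa, hxe⟩
      have hle : m * (x - a) ≤ (a - (m*a+b))/2 := by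
        calc m * (x - a) ≤ m * (((a - (m*a+b))/m)/2) := by nlinarith
          _ = (a - (m*a+b))/2 := by field_simp
      have hfxlt : f x < a := by rw [hfx]; nlinarith
      have := hsm hxa
      rw [ha] at this
      linarith
    · exact heq
    · exfalso
      set y := (a + (m*a+b))/2 with hydef
      set z := f⁻¹ y with hzdef
      have hfz : f z = y := by simp [hzdef]
      have hza : a < z := by
        by_contra hc
        push_neg at hc
        have := hsm.monotone hc
        rw [hfz, ha] at this
        simp [hydef] at this; linarith
      have hx3 : a + ε₁/2 ∈ Set.Ioo a (a + ε₁) := hx2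
      have : f z < f (a + ε₁/2) := by
        rw [hfz, hrep _ hx3]
        simp [hydef]; nlinarith
      have hzlt : z < a + ε₁/2 := by
        by_contra hc
        push_neg at hc
        exact absurd (hsm.monotone hc) (by rw [not_le]; exact this)
      have hzm : z ∈ Set.Ioo a (a + ε₁) := ⟨hza, by linarith⟩
      have := hrep z hzm
      rw [hfz] at this
      have : m * z < m * a := by simp [hydef] at this; linarith
      nlinarith
  refine ⟨ε₁, hε₁, m, hmpos, fun x hx => ?_⟩
  rw [hrep x hx]; linarith

/-- left germ of a PL bijection at a fixed point -/
lemma aff_left (f : Equiv.Perm ℝ) (hsm : StrictMono ⇑f) (hpl : IsPL ⇑f) {c : ℝ} (hc : f c = c) :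
    ∃ ε > 0, ∃ m > 0, ∀ x ∈ Set.Ioo (c - ε) c, f x = c + m * (x - c) := by
  obtain ⟨ε₁, hε₁, hgap⟩ := exists_gap hpl c
  have hloc : ∀ x ∈ Set.Ioo (c - ε₁) c, LocallyAffineAt ⇑f x := by
    intro x hx
    have := hgap x (ne_of_lt hx.2) (by rw [abs_of_neg (by linarith [hx.2])]; linarith [hx.1])
    simpa using not_not.mp (by simpa using this)
  obtain ⟨m, b, hrep⟩ := affine_on_interval (by linarith : c - ε₁ < c) hloc
  have hx1 : c - ε₁/2 ∈ Set.Ioo (c - ε₁) c := ⟨by linarith, by linarith⟩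
  have hx2 : c - ε₁/3 ∈ Set.Ioo (c - ε₁) c := ⟨by linarith, by linarith⟩
  have hmpos : 0 < m := by
    have hlt := hsm (show c - ε₁/2 < c - ε₁/3 by linarith)
    rw [hrep _ hx1, hrep _ hx2] at hlt
    nlinarith
  have hfix : m * c + b = c := by
    rcases lt_trichotomy (m * c + b) c with hlt | heq | hgt
    · exfalso
      set y := (c + (m*c+b))/2 with hydef
      set z := f⁻¹ y with hzdef
      have hfz : f z = y := by simp [hzdef]
      have hzc : z < c := by
        by_contra hcon
        push_neg at hcon
        have := hsm.monotone hcon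
        rw [hfz, hc] at this
        simp [hydef] at this; linarith
      have : f (c - ε₁/2) < f z := by
        rw [hfz, hrep _ hx1]
        simp [hydef]; nlinarith
      have hzgt : c - ε₁/2 < z := by
        by_contra hcon
        push_neg at hcon
        exact absurd (hsm.monotone hcon) (by rw [not_le]; exact this)
      have hzm : z ∈ Set.Ioo (c - ε₁) c := ⟨by linarith, hzc⟩
      have := hrep z hzm
      rw [hfz] at this
      have : m * c < m * z := by simp [hydef] at this; linarith
      nlinarith
    · exact heq
    · exfalso
      have hQpos : 0 < (m*c+b - c)/m := div_pos (by linarith) hmpos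
      obtain ⟨x, hxa, hxe, hxr⟩ : ∃ x : ℝ, c - ε₁ < x ∧ x < c ∧ c - x ≤ ((m*c+b - c)/m)/2 := by
        refine ⟨c - min ε₁ ((m*c+b - c)/m) / 2, ?_, ?_, ?_⟩
        · have := min_le_left ε₁ ((m*c+b - c)/m); linarith
        · have := lt_min hε₁ hQpos; linarith
        · have := min_le_right ε₁ ((m*c+b - c)/m); linarith
      have hfx : f x = m * x + b := hrep x ⟨hxa, hxe⟩
      have hle : m * (c - x) ≤ (m*c+b - c)/2 := by
        calc m * (c - x) ≤ m * (((m*c+b - c)/m)/2) := by nlinarith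
          _ = (m*c+b - c)/2 := by field_simp
      have hfxgt : c < f x := by rw [hfx]; nlinarith
      have := hsm hxe
      rw [hc] at this
      linarith
  refine ⟨ε₁, hε₁, m, hmpos, fun x hx => ?_⟩
  rw [hrep x hx]; linarith

lemma inv_rep_right (f : Equiv.Perm ℝ) {a ε m : ℝ} (hε : 0 < ε) (hm : 0 < m)
    (hrep : ∀ x ∈ Set.Ioo a (a + ε), f x = a + m * (x - a)) :
    ∀ x ∈ Set.Ioo a (a + m * ε), f⁻¹ x = a + (x - a)/m := by
  intro x hx
  have hy : a + (x - a)/m ∈ Set.Ioo a (a + ε) := by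
    constructor
    · have : 0 < (x - a)/m := div_pos (by linarith [hx.1]) hm
      linarith
    · have : (x - a)/m < ε := (div_lt_iff₀ hm).mpr (by linarith [hx.2])
      linarith
  have hfy : f (a + (x - a)/m) = x := by
    rw [hrep _ hy]
    field_simp
    ring
  have : f (f⁻¹ x) = x := f.apply_symm_apply x
  exact f.injective (by rw [this, hfy])

lemma inv_rep_left (f : Equiv.Perm ℝ) {a ε m : ℝ} (hε : 0 < ε) (hm : 0 < m)
    (hrep : ∀ x ∈ Set.Ioo (a - ε) a, f x = a + m * (x - a)) :
    ∀ x ∈ Set.Ioo (a - m * ε) a, f⁻¹ x = a + (x - a)/m := by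
  intro x hx
  have hy : a + (x - a)/m ∈ Set.Ioo (a - ε) a := by
    constructor
    · have : -ε < (x - a)/m := by
        rw [lt_div_iff₀ hm]
        nlinarith [hx.1]
      linarith
    · have : (x - a)/m < 0 := div_neg_of_neg_of_pos (by linarith [hx.2]) hm
      linarith
  have hfy : f (a + (x - a)/m) = x := by
    rw [hrep _ hy]
    field_simp
    ring
  have : f (f⁻¹ x) = x := f.apply_symm_apply x
  exact f.injective (by rw [this, hfy])

/-- the commutator of two PL bijections fixing `a` is trivial on a right neighbourhood of `a` -/
lemma comm_right (g h : Equiv.Perm ℝ) (hgsm : StrictMono ⇑g) (hhsm : StrictMono ⇑h)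
    (hgpl : IsPL ⇑g) (hhpl : IsPL ⇑h) {a : ℝ} (hga : g a = a) (hha : h a = a) :
    ∃ ε > 0, ∀ x ∈ Set.Ioo a (a + ε), (g * h * g⁻¹ * h⁻¹) x = x := by
  obtain ⟨εh, hεh, mh, hmh, reph⟩ := aff_right h hhsm hhpl hha
  obtain ⟨εg, hεg, mg, hmg, repg⟩ := aff_right g hgsm hgpl hga
  refine ⟨min (min (mh*εh) (mg*εg)) (min (mh*(mg*εg)) (mh*(mg*εh))), by positivity, fun x hx => ?_⟩
  have h1 := min_le_left (min (mh*εh) (mg*εg)) (min (mh*(mg*εg)) (mh*(mg*εh)))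
  have h2 := min_le_right (min (mh*εh) (mg*εg)) (min (mh*(mg*εg)) (mh*(mg*εh)))
  have h3 := min_le_left (mh*εh) (mg*εg)
  have h4 := min_le_right (mh*εh) (mg*εg)
  have h5 := min_le_left (mh*(mg*εg)) (mh*(mg*εh))
  have h6 := min_le_right (mh*(mg*εg)) (mh*(mg*εh))
  obtain ⟨hxa, hxe⟩ := hx
  have hu1 : x - a < mh * εh := by linarith
  have hu2 : x - a < mg * εg := by linarith
  have hu3 : x - a < mh*(mg*εg) := by linarith
  have hu4 : x - a < mh*(mg*εh) := by linarith
  have hu0 : 0 < x - a := by linarith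
  -- step 1
  have s1 : h⁻¹ x = a + (x - a)/mh := inv_rep_right h hεh hmh reph x ⟨hxa, by linarith⟩
  -- step 2
  have m1 : a + (x - a)/mh ∈ Set.Ioo a (a + mg * εg) := by
    constructor
    · have : 0 < (x-a)/mh := div_pos hu0 hmh
      linarith
    · have : (x-a)/mh < mg*εg := (div_lt_iff₀ hmh).mpr (by nlinarith)
      linarith
  have s2 : g⁻¹ (a + (x - a)/mh) = a + ((x - a)/mh)/mg := by
    have := inv_rep_right g hεg hmg repg _ m1
    rw [this]
    ring_nf
  -- step 3
  have m2 : a + ((x - a)/mh)/mg ∈ Set.Ioo a (a + εh) := by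
    constructor
    · have : 0 < ((x-a)/mh)/mg := div_pos (div_pos hu0 hmh) hmg
      linarith
    · have : ((x-a)/mh)/mg < εh := by
        rw [div_lt_iff₀ hmg, div_lt_iff₀ hmh]
        nlinarith
      linarith
  have s3 : h (a + ((x - a)/mh)/mg) = a + (x - a)/mg := by
    rw [reph _ m2]
    field_simp
    ring
  -- step 4
  have m3 : a + (x - a)/mg ∈ Set.Ioo a (a + εg) := by
    constructor
    · have : 0 < (x-a)/mg := div_pos hu0 hmg
      linarith
    · have : (x-a)/mg < εg := (div_lt_iff₀ hmg).mpr (by nlinarith)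
      linarith
  have s4 : g (a + (x - a)/mg) = x := by
    rw [repg _ m3]
    field_simp
    ring
  calc (g * h * g⁻¹ * h⁻¹) x = g (h (g⁻¹ (h⁻¹ x))) := rfl
    _ = x := by rw [s1, s2, s3, s4]

/-- the commutator of two PL bijections fixing `a` is trivial on a left neighbourhood of `a` -/
lemma comm_left (g h : Equiv.Perm ℝ) (hgsm : StrictMono ⇑g) (hhsm : StrictMono ⇑h)
    (hgpl : IsPL ⇑g) (hhpl : IsPL ⇑h) {a : ℝ} (hga : g a = a) (hha : h a = a) :
    ∃ ε > 0, ∀ x ∈ Set.Ioo (a - ε) a, (g * h * g⁻¹ * h⁻¹) x = x := by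
  obtain ⟨εh, hεh, mh, hmh, reph⟩ := aff_left h hhsm hhpl hha
  obtain ⟨εg, hεg, mg, hmg, repg⟩ := aff_left g hgsm hgpl hga
  refine ⟨min (min (mh*εh) (mg*εg)) (min (mh*(mg*εg)) (mh*(mg*εh))), by positivity, fun x hx => ?_⟩
  have h1 := min_le_left (min (mh*εh) (mg*εg)) (min (mh*(mg*εg)) (mh*(mg*εh)))
  have h2 := min_le_right (min (mh*εh) (mg*εg)) (min (mh*(mg*εg)) (mh*(mg*εh)))
  have h3 := min_le_left (mh*εh) (mg*εg)
  have h4 := min_le_right (mh*εh) (mg*εg)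
  have h5 := min_le_left (mh*(mg*εg)) (mh*(mg*εh))
  have h6 := min_le_right (mh*(mg*εg)) (mh*(mg*εh))
  obtain ⟨hxa, hxe⟩ := hx
  have hu1 : -(mh * εh) < x - a := by linarith
  have hu2 : -(mg * εg) < x - a := by linarith
  have hu3 : -(mh*(mg*εg)) < x - a := by linarith
  have hu4 : -(mh*(mg*εh)) < x - a := by linarith
  have hu0 : x - a < 0 := by linarith
  have s1 : h⁻¹ x = a + (x - a)/mh := inv_rep_left h hεh hmh reph x ⟨by linarith, hxe⟩
  have m1 : a + (x - a)/mh ∈ Set.Ioo (a - mg * εg) a := by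
    constructor
    · have : -(mg*εg) < (x-a)/mh := by
        rw [lt_div_iff₀ hmh]
        nlinarith
      linarith
    · have : (x-a)/mh < 0 := div_neg_of_neg_of_pos hu0 hmh
      linarith
  have s2 : g⁻¹ (a + (x - a)/mh) = a + ((x - a)/mh)/mg := by
    have := inv_rep_left g hεg hmg repg _ m1
    rw [this]
    ring_nf
  have m2 : a + ((x - a)/mh)/mg ∈ Set.Ioo (a - εh) a := by
    constructor
    · have : -εh < ((x-a)/mh)/mg := by
        rw [lt_div_iff₀ hmg, lt_div_iff₀ hmh]
        nlinarith
      linarith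
    · have : ((x-a)/mh)/mg < 0 := div_neg_of_neg_of_pos (div_neg_of_neg_of_pos hu0 hmh) hmg
      linarith
  have s3 : h (a + ((x - a)/mh)/mg) = a + (x - a)/mg := by
    rw [reph _ m2]
    field_simp
    ring
  have m3 : a + (x - a)/mg ∈ Set.Ioo (a - εg) a := by
    constructor
    · have : -εg < (x-a)/mg := by
        rw [lt_div_iff₀ hmg]
        nlinarith
      linarith
    · have : (x-a)/mg < 0 := div_neg_of_neg_of_pos hu0 hmg
      linarith
  have s4 : g (a + (x - a)/mg) = x := by
    rw [repg _ m3]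
    field_simp
    ring
  calc (g * h * g⁻¹ * h⁻¹) x = g (h (g⁻¹ (h⁻¹ x))) := rfl
    _ = x := by rw [s1, s2, s3, s4]

/-- all points of an orbital move the same way -/
lemma orbital_direction (f : Equiv.Perm ℝ) (hc : Continuous ⇑f) {p q : ℝ}
    (horb : IsOrbital ⇑f (Set.Ioo p q)) :
    (∀ x ∈ Set.Ioo p q, x < f x) ∨ (∀ x ∈ Set.Ioo p q, f x < x) := by
  obtain ⟨x₀, hx₀, heq⟩ := horb
  have hsupp : Set.Ioo p q ⊆ Supp ⇑f := heq ▸ connectedComponentIn_subset _ _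
  by_contra hcon
  push_neg at hcon
  obtain ⟨⟨x, hx, hx'⟩, ⟨y, hy, hy'⟩⟩ := hcon
  have hxlt : f x < x := lt_of_le_of_ne hx' (hsupp hx)
  have hylt : y < f y := lt_of_le_of_ne hy' (Ne.symm (hsupp hy))
  set F : ℝ → ℝ := fun z => f z - z with hF
  have hFc : Continuous F := hc.sub continuous_id
  rcases le_total x y with hle | hle
  · have himg := intermediate_value_Icc hle hFc.continuousOn
    have h0 : (0:ℝ) ∈ Set.Icc (F x) (F y) := ⟨by simp [hF]; linarith, by simp [hF]; linarith⟩
    obtain ⟨z, hz, hz0⟩ := himg h0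
    have hzm : z ∈ Set.Ioo p q := ⟨lt_of_lt_of_le hx.1 hz.1, lt_of_le_of_lt hz.2 hy.2⟩
    exact (hsupp hzm) (by simpa [hF, sub_eq_zero] using hz0)
  · have himg := intermediate_value_Icc' hle hFc.continuousOn
    have h0 : (0:ℝ) ∈ Set.Icc (F x) (F y) := ⟨by simp [hF]; linarith, by simp [hF]; linarith⟩
    obtain ⟨z, hz, hz0⟩ := himg h0
    have hzm : z ∈ Set.Ioo p q := ⟨lt_of_lt_of_le hy.1 hz.1, lt_of_le_of_lt hz.2 hx.2⟩
    exact (hsupp hzm) (by simpa [hF, sub_eq_zero] using hz0)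

lemma supp_sub_gsupp {H : Subgroup (Equiv.Perm ℝ)} {g : Equiv.Perm ℝ} (hg : g ∈ H) :
    Supp ⇑g ⊆ GSupp H := fun x hx => ⟨g, hg, hx⟩

lemma gsupp_open (H : Subgroup (Equiv.Perm ℝ)) (hc : ∀ g ∈ H, Continuous ⇑g) :
    IsOpen (GSupp H) := by
  have : GSupp H = ⋃ g ∈ {g : Equiv.Perm ℝ | g ∈ H}, Supp ⇑g := by
    ext x
    simp only [GSupp, Supp, Set.mem_setOf_eq, Set.mem_iUnion]
    constructor
    · rintro ⟨g, hg, hx⟩; exact ⟨g, hg, hx⟩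
    · rintro ⟨g, hg, hx⟩; exact ⟨g, hg, hx⟩
  rw [this]
  exact isOpen_biUnion (fun g hg => supp_open g (hc g hg))

lemma supp_inv (f : Equiv.Perm ℝ) : Supp ⇑f⁻¹ = Supp ⇑f := by
  ext x
  simp only [Supp, Set.mem_setOf_eq]
  constructor
  · intro hx hc
    apply hx
    calc f⁻¹ x = f⁻¹ (f x) := by rw [hc]
      _ = x := by simp
  · intro hx hc
    apply hx
    have := congrArg f hc
    simpa using this.symm

lemma orbital_endpoints (f : Equiv.Perm ℝ) (hc : Continuous ⇑f) {p q : ℝ} (hpq : p < q)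
    (horb : IsOrbital ⇑f (Set.Ioo p q)) :
    f p = p ∧ f q = q ∧ Set.Ioo p q ⊆ Supp ⇑f := by
  obtain ⟨x, hx, heq⟩ := horb
  obtain ⟨hp, hq⟩ := endpoints_not_mem (supp_open f hc) hpq heq.symm
  exact ⟨fix_of_not_supp hp, fix_of_not_supp hq, heq ▸ connectedComponentIn_subset _ _⟩

lemma main_left (G H : Subgroup (Equiv.Perm ℝ)) (hG : ∀ g ∈ G, PLHomeo g)
    (hnc : ¬ HasTransitionChain2 G) (hHG : H ≤ G) (a b : ℝ)
    (hA : IsGroupOrbital H (Set.Ioo a b)) (h : Equiv.Perm ℝ) (hh : h ∈ H)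
    {d : ℝ} (had : a < d) (hdb : d < b) (horb : IsOrbital ⇑h (Set.Ioo a d)) : False := by
  have hsm : ∀ g ∈ H, StrictMono ⇑g := fun g hg => (hG g (hHG hg)).1.1
  have hpl : ∀ g ∈ H, IsPL ⇑g := fun g hg => (hG g (hHG hg)).2
  have hcont : ∀ g ∈ H, Continuous ⇑g := fun g hg => cont_of_sm g (hsm g hg)
  have hGopen : IsOpen (GSupp H) := gsupp_open H hcont
  obtain ⟨x₀, hx₀, hAeq⟩ := hA
  have hab : a < b := lt_trans had hdb
  have hcc : ∀ y ∈ Set.Ioo a b, connectedComponentIn (GSupp H) y = Set.Ioo a b := by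
    intro y hy
    have hy' : y ∈ connectedComponentIn (GSupp H) x₀ := by rw [← hAeq]; exact hy
    rw [← connectedComponentIn_eq hy', ← hAeq]
  have hIoosub : Set.Ioo a b ⊆ GSupp H := by
    rw [hAeq]; exact connectedComponentIn_subset _ _
  have hbd : a ∉ GSupp H ∧ b ∉ GSupp H := endpoints_not_mem hGopen hab hAeq.symm
  have hafix : ∀ g ∈ H, g a = a := by
    intro g hg
    by_contra hc
    exact hbd.1 ⟨g, hg, hc⟩
  -- endpoints of h's orbital
  obtain ⟨hha, hhd, hsubsupp⟩ := orbital_endpoints h (hcont h hh) had horb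
  -- a mover of d
  have hdmem : d ∈ Set.Ioo a b := ⟨had, hdb⟩
  obtain ⟨g, hgH, hgd⟩ : ∃ g ∈ H, g d ≠ d := hIoosub hdmem
  have hOsub : connectedComponentIn (Supp ⇑g) d ⊆ Set.Ioo a b := by
    have h1 := connectedComponentIn_mono d (supp_sub_gsupp hgH)
    rw [hcc d hdmem] at h1
    exact h1
  obtain ⟨p, q, hpd, hdq, hap, hqb, hOeq⟩ :=
    ccIn_eq_Ioo (supp_open g (hcont g hgH)) hgd hOsub
  have horbg : IsOrbital ⇑g (Set.Ioo p q) := ⟨d, hgd, hOeq.symm⟩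
  have hpa : p = a := by
    rcases eq_or_lt_of_le hap with h' | h'
    · exact h'.symm
    · exact absurd ⟨h, hHG hh, g, hHG hgH, a, p, d, q, horb, horbg, h', hpd, hdq⟩ hnc
  subst hpa
  -- get a rightward mover
  obtain ⟨g₀, hg₀H, hg₀orb, hg₀dir⟩ :
      ∃ g₀ ∈ H, IsOrbital ⇑g₀ (Set.Ioo p q) ∧ ∀ x ∈ Set.Ioo p q, x < g₀ x := by
    rcases orbital_direction g (hcont g hgH) horbg with hdir | hdir
    · exact ⟨g, hgH, horbg, hdir⟩
    · refine ⟨g⁻¹, inv_mem hgH, ?_, ?_⟩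
      · obtain ⟨x, hx, heq⟩ := horbg
        exact ⟨x, by rw [supp_inv]; exact hx, by rw [supp_inv]; exact heq⟩
      · intro x hx
        by_contra hcon
        push_neg at hcon
        have := (hsm g hgH).monotone hcon
        rw [(show ∀ (f : Equiv.Perm ℝ) (x : ℝ), f (f⁻¹ x) = x from fun f x => f.apply_symm_apply x)] at this
        exact absurd (lt_of_le_of_lt this (hdir x hx)) (lt_irrefl x)
  obtain ⟨hg₀p, hg₀q, hg₀supp⟩ := orbital_endpoints g₀ (hcont g₀ hg₀H) (lt_trans hpd hdq) hg₀orb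
  -- the commutator
  set w := g₀ * h * g₀⁻¹ * h⁻¹ with hwdef
  have hwH : w ∈ H := mul_mem (mul_mem (mul_mem hg₀H hh) (inv_mem hg₀H)) (inv_mem hh)
  obtain ⟨ε₁, hε₁, hwid⟩ := comm_right g₀ h (hsm g₀ hg₀H) (hsm h hh)
    (hpl g₀ hg₀H) (hpl h hh) hg₀p (hafix h hh)
  -- the point z = g₀⁻¹ d lies in (a, d)
  have hg₀invq : g₀⁻¹ q = q := by
    have := congrArg (⇑g₀⁻¹) hg₀q
    simpa using this.symm
  have hg₀inva : g₀⁻¹ p = p := by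
    have := congrArg (⇑g₀⁻¹) hg₀p
    simpa using this.symm
  have hsminv := sm_inv g₀ (hsm g₀ hg₀H)
  set z := g₀⁻¹ d with hzdef
  have hza : p < z := by
    have := hsminv hpd
    rwa [hg₀inva] at this
  have hzq : z < q := by
    have := hsminv hdq
    rwa [hg₀invq] at this
  have hzd : z < d := by
    have := hg₀dir z ⟨hza, hzq⟩
    rwa [hzdef, (show ∀ (f : Equiv.Perm ℝ) (x : ℝ), f (f⁻¹ x) = x from fun f x => f.apply_symm_apply x)] at this
  have hzsupp : z ∈ Supp ⇑h := hsubsupp ⟨hza, hzd⟩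
  -- w moves d
  have hwd : w d ≠ d := by
    have hinvd : h⁻¹ d = d := by
      have := congrArg (⇑h⁻¹) hhd
      simpa using this.symm
    have hcalc : w d = g₀ (h z) := by
      rw [hwdef]
      simp only [Equiv.Perm.mul_apply]
      rw [hinvd, hzdef]
    intro hcon
    rw [hcalc] at hcon
    have : g₀ (h z) = g₀ z := by
      rw [hcon, hzdef, (show ∀ (f : Equiv.Perm ℝ) (x : ℝ), f (f⁻¹ x) = x from fun f x => f.apply_symm_apply x)]
    exact hzsupp (g₀.injective this)
  -- w's orbital at d
  have hOwsub : connectedComponentIn (Supp ⇑w) d ⊆ Set.Ioo p b := by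
    have h1 := connectedComponentIn_mono d (supp_sub_gsupp hwH)
    rw [hcc d hdmem] at h1
    exact h1
  obtain ⟨r, s, hrd, hds, har, hsb, hOweq⟩ :=
    ccIn_eq_Ioo (supp_open w (hcont w hwH)) hwd hOwsub
  have horbw : IsOrbital ⇑w (Set.Ioo r s) := ⟨d, hwd, hOweq.symm⟩
  have hwsupp : Set.Ioo r s ⊆ Supp ⇑w := by
    rw [← hOweq]
    exact connectedComponentIn_subset _ _
  -- r is bounded away from a
  set ε₀ := min ε₁ (d - p) with hε₀def
  have hε₀pos : 0 < ε₀ := lt_min hε₁ (by linarith)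
  have hrge : p + ε₀ ≤ r := by
    by_contra hcon
    push_neg at hcon
    have hrs : r < s := lt_trans hrd hds
    have hrmin : r < min s (p + ε₀) := lt_min hrs hcon
    set z' := (r + min s (p + ε₀)) / 2 with hz'def
    have hz'1 : r < z' := by
      rw [hz'def]; linarith
    have hz'2 : z' < s := by
      have := min_le_left s (p + ε₀); rw [hz'def]; linarith
    have hz'3 : z' < p + ε₀ := by
      have := min_le_right s (p + ε₀); rw [hz'def]; linarith
    have hz'a : p < z' := lt_of_le_of_lt har hz'1
    have hwz' : w z' = z' := hwid z' ⟨hz'a, by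
      have : ε₀ ≤ ε₁ := min_le_left _ _
      linarith⟩
    exact (hwsupp ⟨hz'1, hz'2⟩) hwz'
  have hra : p < r := lt_of_lt_of_le (by linarith) hrge
  exact hnc ⟨h, hHG hh, w, hHG hwH, p, r, d, s, horb, horbw, hra, hrd, hds⟩

lemma main_right (G H : Subgroup (Equiv.Perm ℝ)) (hG : ∀ g ∈ G, PLHomeo g)
    (hnc : ¬ HasTransitionChain2 G) (hHG : H ≤ G) (a b : ℝ)
    (hA : IsGroupOrbital H (Set.Ioo a b)) (h : Equiv.Perm ℝ) (hh : h ∈ H)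
    {c : ℝ} (hac : a < c) (hcb : c < b) (horb : IsOrbital ⇑h (Set.Ioo c b)) : False := by
  have hsm : ∀ g ∈ H, StrictMono ⇑g := fun g hg => (hG g (hHG hg)).1.1
  have hpl : ∀ g ∈ H, IsPL ⇑g := fun g hg => (hG g (hHG hg)).2
  have hcont : ∀ g ∈ H, Continuous ⇑g := fun g hg => cont_of_sm g (hsm g hg)
  have hGopen : IsOpen (GSupp H) := gsupp_open H hcont
  obtain ⟨x₀, hx₀, hAeq⟩ := hA
  have hab : a < b := lt_trans hac hcb
  have hcc : ∀ y ∈ Set.Ioo a b, connectedComponentIn (GSupp H) y = Set.Ioo a b := by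
    intro y hy
    have hy' : y ∈ connectedComponentIn (GSupp H) x₀ := by rw [← hAeq]; exact hy
    rw [← connectedComponentIn_eq hy', ← hAeq]
  have hIoosub : Set.Ioo a b ⊆ GSupp H := by
    rw [hAeq]; exact connectedComponentIn_subset _ _
  have hbd : a ∉ GSupp H ∧ b ∉ GSupp H := endpoints_not_mem hGopen hab hAeq.symm
  have hbfix : ∀ g ∈ H, g b = b := by
    intro g hg
    by_contra hcon
    exact hbd.2 ⟨g, hg, hcon⟩
  obtain ⟨hhc, hhb, hsubsupp⟩ := orbital_endpoints h (hcont h hh) hcb horb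
  have hcmem : c ∈ Set.Ioo a b := ⟨hac, hcb⟩
  obtain ⟨g, hgH, hgc⟩ : ∃ g ∈ H, g c ≠ c := hIoosub hcmem
  have hOsub : connectedComponentIn (Supp ⇑g) c ⊆ Set.Ioo a b := by
    have h1 := connectedComponentIn_mono c (supp_sub_gsupp hgH)
    rw [hcc c hcmem] at h1
    exact h1
  obtain ⟨p, q, hpc, hcq, hap, hqb, hOeq⟩ :=
    ccIn_eq_Ioo (supp_open g (hcont g hgH)) hgc hOsub
  have horbg : IsOrbital ⇑g (Set.Ioo p q) := ⟨c, hgc, hOeq.symm⟩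
  have hqb' : q = b := by
    rcases eq_or_lt_of_le hqb with h' | h'
    · exact h'
    · exact absurd ⟨g, hHG hgH, h, hHG hh, p, c, q, b, horbg, horb, hpc, hcq, h'⟩ hnc
  subst hqb'
  -- get a leftward mover
  obtain ⟨g₀, hg₀H, hg₀orb, hg₀dir⟩ :
      ∃ g₀ ∈ H, IsOrbital ⇑g₀ (Set.Ioo p q) ∧ ∀ x ∈ Set.Ioo p q, g₀ x < x := by
    rcases orbital_direction g (hcont g hgH) horbg with hdir | hdir
    · refine ⟨g⁻¹, inv_mem hgH, ?_, ?_⟩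
      · obtain ⟨x, hx, heq⟩ := horbg
        exact ⟨x, by rw [supp_inv]; exact hx, by rw [supp_inv]; exact heq⟩
      · intro x hx
        by_contra hcon
        push_neg at hcon
        have := (hsm g hgH).monotone hcon
        rw [(show ∀ (f : Equiv.Perm ℝ) (x : ℝ), f (f⁻¹ x) = x from fun f x => f.apply_symm_apply x)] at this
        exact absurd (lt_of_lt_of_le (hdir x hx) this) (lt_irrefl x)
    · exact ⟨g, hgH, horbg, hdir⟩
  obtain ⟨hg₀p, hg₀q, hg₀supp⟩ := orbital_endpoints g₀ (hcont g₀ hg₀H) (lt_trans hpc hcq) hg₀orb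
  set w := g₀ * h * g₀⁻¹ * h⁻¹ with hwdef
  have hwH : w ∈ H := mul_mem (mul_mem (mul_mem hg₀H hh) (inv_mem hg₀H)) (inv_mem hh)
  obtain ⟨ε₁, hε₁, hwid⟩ := comm_left g₀ h (hsm g₀ hg₀H) (hsm h hh)
    (hpl g₀ hg₀H) (hpl h hh) hg₀q (hbfix h hh)
  have hg₀invq : g₀⁻¹ q = q := by
    have := congrArg (⇑g₀⁻¹) hg₀q
    simpa using this.symm
  have hg₀invp : g₀⁻¹ p = p := by
    have := congrArg (⇑g₀⁻¹) hg₀p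
    simpa using this.symm
  have hsminv := sm_inv g₀ (hsm g₀ hg₀H)
  set z := g₀⁻¹ c with hzdef
  have hzp : p < z := by
    have := hsminv hpc
    rwa [hg₀invp] at this
  have hzq : z < q := by
    have := hsminv hcq
    rwa [hg₀invq] at this
  have hcz : c < z := by
    have := hg₀dir z ⟨hzp, hzq⟩
    rwa [hzdef, (show ∀ (f : Equiv.Perm ℝ) (x : ℝ), f (f⁻¹ x) = x from fun f x => f.apply_symm_apply x)] at this
  have hzsupp : z ∈ Supp ⇑h := hsubsupp ⟨hcz, hzq⟩
  have hwc : w c ≠ c := by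
    have hinvc : h⁻¹ c = c := by
      have := congrArg (⇑h⁻¹) hhc
      simpa using this.symm
    have hcalc : w c = g₀ (h z) := by
      rw [hwdef]
      simp only [Equiv.Perm.mul_apply]
      rw [hinvc, hzdef]
    intro hcon
    rw [hcalc] at hcon
    have : g₀ (h z) = g₀ z := by
      rw [hcon, hzdef, (show ∀ (f : Equiv.Perm ℝ) (x : ℝ), f (f⁻¹ x) = x from fun f x => f.apply_symm_apply x)]
    exact hzsupp (g₀.injective this)
  have hOwsub : connectedComponentIn (Supp ⇑w) c ⊆ Set.Ioo a q := by
    have h1 := connectedComponentIn_mono c (supp_sub_gsupp hwH)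
    rw [hcc c hcmem] at h1
    exact h1
  obtain ⟨r, s, hrc, hcs, har, hsb, hOweq⟩ :=
    ccIn_eq_Ioo (supp_open w (hcont w hwH)) hwc hOwsub
  have horbw : IsOrbital ⇑w (Set.Ioo r s) := ⟨c, hwc, hOweq.symm⟩
  have hwsupp : Set.Ioo r s ⊆ Supp ⇑w := by
    rw [← hOweq]
    exact connectedComponentIn_subset _ _
  set ε₀ := min ε₁ (q - c) with hε₀def
  have hε₀pos : 0 < ε₀ := lt_min hε₁ (by linarith)
  have hsle : s ≤ q - ε₀ := by
    by_contra hcon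
    push_neg at hcon
    have hrs : r < s := lt_trans hrc hcs
    have hmaxlt : max r (q - ε₀) < s := max_lt hrs hcon
    set z' := (max r (q - ε₀) + s) / 2 with hz'def
    have hz'1 : r < z' := by
      have := le_max_left r (q - ε₀); rw [hz'def]; linarith
    have hz'2 : z' < s := by
      rw [hz'def]; linarith
    have hz'3 : q - ε₀ < z' := by
      have := le_max_right r (q - ε₀); rw [hz'def]; linarith
    have hz'4 : z' < q := lt_of_lt_of_le hz'2 hsb
    have hwz' : w z' = z' := hwid z' ⟨by
      have : ε₀ ≤ ε₁ := min_le_left _ _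
      linarith, hz'4⟩
    exact (hwsupp ⟨hz'1, hz'2⟩) hwz'
  have hsq : s < q := lt_of_le_of_lt hsle (by linarith)
  exact hnc ⟨w, hHG hwH, h, hHG hh, r, c, s, q, horbw, horb, hrc, hcs, hsq⟩


theorem stmt8 (G H : Subgroup (Equiv.Perm ℝ)) (hG : ∀ g ∈ G, PLHomeo g)
    (hnc : ¬ HasTransitionChain2 G) (hHG : H ≤ G) (a b : ℝ)
    (hA : IsGroupOrbital H (Set.Ioo a b)) (h : Equiv.Perm ℝ) (hh : h ∈ H) :
    ((∃ d, Set.Ioo a d ⊆ Set.Ioo a b ∧ IsOrbital ⇑h (Set.Ioo a d)) →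
      ∃ c, Set.Ioo c b ⊆ Set.Ioo a b ∧ IsOrbital ⇑h (Set.Ioo c b)) ∧
    ((∃ c, Set.Ioo c b ⊆ Set.Ioo a b ∧ IsOrbital ⇑h (Set.Ioo c b)) →
      ∃ d, Set.Ioo a d ⊆ Set.Ioo a b ∧ IsOrbital ⇑h (Set.Ioo a d)) := by
  have hab : a < b := by
    obtain ⟨x₀, hx₀, hAeq⟩ := id hA
    have : x₀ ∈ Set.Ioo a b := by
      rw [hAeq]; exact mem_connectedComponentIn hx₀
    exact lt_trans this.1 this.2
  constructor
  · rintro ⟨d, hsub, horb⟩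
    have had : a < d := by
      obtain ⟨x, hx, heq⟩ := horb
      have : x ∈ Set.Ioo a d := by rw [heq]; exact mem_connectedComponentIn hx
      exact lt_trans this.1 this.2
    have hdb : d ≤ b := by
      by_contra hcon
      push_neg at hcon
      exact (lt_irrefl b) (hsub ⟨hab, hcon⟩).2
    rcases eq_or_lt_of_le hdb with h' | h'
    · subst h'
      exact ⟨a, subset_rfl, horb⟩
    · exact absurd (main_left G H hG hnc hHG a b hA h hh had h' horb) id
  · rintro ⟨c, hsub, horb⟩
    have hcb : c < b := by
      obtain ⟨x, hx, heq⟩ := horb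
      have : x ∈ Set.Ioo c b := by rw [heq]; exact mem_connectedComponentIn hx
      exact lt_trans this.1 this.2
    have hac : a ≤ c := by
      by_contra hcon
      push_neg at hcon
      exact (lt_irrefl a) (hsub ⟨hcon, hab⟩).1
    rcases eq_or_lt_of_le hac with h' | h'
    · subst h'
      exact ⟨b, subset_rfl, horb⟩
    · exact absurd (main_right G H hG hnc hHG a b hA h hh h' hcb horb) id
end

section
/- Suppose H is a subgroup of PL₊(I) with orbital A, and some h ∈ H has an orbital B ⊆ A sharing exactly one end of A, while no other orbital of h shares an end with A and h does not realize the other end of A. Then the subgroup ⟨h⟩ together with suitable conjugates inside H yields a transition chain of length two in H; that is, H admits two element-orbitals (a₁,a₂) and (b₁,b₂) with a₁ < b₁ < a₂ < b₂. -/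
section Stmt9Helpers

theorem Equiv.Perm.inv_apply_self {α : Type*} (f : Equiv.Perm α) (x : α) : f⁻¹ (f x) = x :=
  Equiv.symm_apply_apply f x

lemma perm_continuous (q : Equiv.Perm ℝ) (hq : StrictMono ⇑q) : Continuous ⇑q :=
  hq.monotone.continuous_of_surjective q.surjective

lemma supp_isOpen_s9 (q : Equiv.Perm ℝ) (hq : StrictMono ⇑q) : IsOpen (Supp ⇑q) :=
  isOpen_ne_fun (perm_continuous q hq) continuous_id

lemma inv_strictMono (q : Equiv.Perm ℝ) (hq : StrictMono ⇑q) : StrictMono ⇑q⁻¹ := by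
  intro x y hxy
  have h2 := hq.lt_iff_lt (a := q⁻¹ x) (b := q⁻¹ y)
  rw [Equiv.Perm.apply_inv_self, Equiv.Perm.apply_inv_self] at h2
  exact h2.mp hxy

lemma endpoint_not_mem (F : Set ℝ) (hF : IsOpen F) (x u v : ℝ) (huv : u < v)
    (hcomp : connectedComponentIn F x = Set.Ioo u v) : u ∉ F ∧ v ∉ F := by
  have key : ∀ t ∈ F, ∀ w, w ∈ connectedComponentIn F t → w ∈ Set.Ioo u v →
      t ∈ Set.Ioo u v := by
    intro t ht w hw1 hw2
    have h1 : connectedComponentIn F t = connectedComponentIn F w := connectedComponentIn_eq hw1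
    have h2 : connectedComponentIn F x = connectedComponentIn F w :=
      connectedComponentIn_eq (by rw [hcomp]; exact hw2)
    have h3 : connectedComponentIn F t = Set.Ioo u v := by rw [h1, ← h2, hcomp]
    rw [← h3]; exact mem_connectedComponentIn ht
  constructor
  · intro hu
    obtain ⟨η, hη, hball⟩ := Metric.isOpen_iff.mp (hF.connectedComponentIn (x := u)) u
      (mem_connectedComponentIn hu)
    set w := u + min η (v - u) / 2 with hw
    have hmin : 0 < min η (v - u) := lt_min hη (by linarith)
    have h1 : min η (v - u) ≤ η := min_le_left _ _
    have h2 : min η (v - u) ≤ v - u := min_le_right _ _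
    have hwb : w ∈ Metric.ball u η := by
      simp only [Metric.mem_ball, Real.dist_eq, hw]
      rw [show u + min η (v - u) / 2 - u = min η (v - u) / 2 by ring,
        abs_of_pos (by linarith)]
      linarith
    have := key u hu w (hball hwb) ⟨by simp only [hw]; linarith, by simp only [hw]; linarith⟩
    exact lt_irrefl u this.1
  · intro hv
    obtain ⟨η, hη, hball⟩ := Metric.isOpen_iff.mp (hF.connectedComponentIn (x := v)) v
      (mem_connectedComponentIn hv)
    set w := v - min η (v - u) / 2 with hw
    have hmin : 0 < min η (v - u) := lt_min hη (by linarith)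
    have h1 : min η (v - u) ≤ η := min_le_left _ _
    have h2 : min η (v - u) ≤ v - u := min_le_right _ _
    have hwb : w ∈ Metric.ball v η := by
      simp only [Metric.mem_ball, Real.dist_eq, hw]
      rw [show v - min η (v - u) / 2 - v = -(min η (v - u) / 2) by ring,
        abs_neg, abs_of_pos (by linarith)]
      linarith
    have := key v hv w (hball hwb) ⟨by simp only [hw]; linarith, by simp only [hw]; linarith⟩
    exact lt_irrefl v this.2

lemma open_conn_eq_Ioo (C : Set ℝ) (hC : IsOpen C) (hconn : IsPreconnected C)
    (hne : C.Nonempty) (hbb : BddBelow C) (hba : BddAbove C) :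
    C = Set.Ioo (sInf C) (sSup C) := by
  have hord := hconn.ordConnected
  apply Set.eq_of_subset_of_subset
  · intro x hx
    obtain ⟨η, hη, hball⟩ := Metric.isOpen_iff.mp hC x hx
    have hlo : x - η / 2 ∈ C := hball (by
      simp only [Metric.mem_ball, Real.dist_eq]
      rw [show x - η / 2 - x = -(η / 2) by ring, abs_neg, abs_of_pos (by linarith)]
      linarith)
    have hhi : x + η / 2 ∈ C := hball (by
      simp only [Metric.mem_ball, Real.dist_eq]
      rw [show x + η / 2 - x = η / 2 by ring, abs_of_pos (by linarith)]
      linarith)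
    exact ⟨lt_of_le_of_lt (csInf_le hbb hlo) (by linarith),
      lt_of_lt_of_le (by linarith : x < x + η / 2) (le_csSup hba hhi)⟩
  · intro x hx
    obtain ⟨u, hu, hux⟩ := exists_lt_of_csInf_lt hne hx.1
    obtain ⟨v, hv, hxv⟩ := exists_lt_of_lt_csSup hne hx.2
    exact hord.out hu hv ⟨le_of_lt hux, le_of_lt hxv⟩

lemma affine_germ (q : Equiv.Perm ℝ) (hq : StrictMono ⇑q) (hpl : IsPL ⇑q) (a : ℝ)
    (ha : q a = a) :
    ∃ δ > 0, ∃ m > 0, ∀ y, a < y → y ≤ a + δ → q y = a + m * (y - a) := by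
  obtain ⟨δ, hδ, hgood⟩ : ∃ δ > 0, ∀ x, a < x → x ≤ a + δ → LocallyAffineAt ⇑q x := by
    by_cases hB : ({x | ¬ LocallyAffineAt ⇑q x} ∩ Set.Ioi a).Nonempty
    · have hfin : ({x | ¬ LocallyAffineAt ⇑q x} ∩ Set.Ioi a).Finite :=
        hpl.subset Set.inter_subset_left
      set t := sInf ({x | ¬ LocallyAffineAt ⇑q x} ∩ Set.Ioi a) with htdef
      have htmem := hB.csInf_mem hfin
      have hta : a < t := htmem.2
      refine ⟨(t - a) / 2, by linarith, fun x hx1 hx2 => ?_⟩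
      by_contra hbad
      have : t ≤ x := csInf_le hfin.bddBelow ⟨hbad, hx1⟩
      linarith
    · refine ⟨1, one_pos, fun x hx1 _ => ?_⟩
      by_contra hbad
      exact hB ⟨x, hbad, hx1⟩
  set y₀ := a + δ with hy₀def
  obtain ⟨ε₀, hε₀, m, c, hpiece⟩ := hgood y₀ (by linarith) (le_refl _)
  set E := {y : ℝ | a ≤ y ∧ y ≤ y₀ ∧ ∀ z, y ≤ z → z ≤ y₀ → q z = m * z + c} with hEdef
  have hy₁E : max a (y₀ - ε₀ / 2) ∈ E := by
    refine ⟨le_max_left _ _, max_le (by linarith) (by linarith), fun z hz1 hz2 => ?_⟩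
    have : y₀ - ε₀ / 2 ≤ z := le_trans (le_max_right _ _) hz1
    exact hpiece z (by rw [abs_lt]; constructor <;> linarith)
  have hEne : E.Nonempty := ⟨_, hy₁E⟩
  have hEbb : BddBelow E := ⟨a, fun z hz => hz.1⟩
  set s := sInf E with hsdef
  have hsy₁ : s ≤ max a (y₀ - ε₀ / 2) := csInf_le hEbb hy₁E
  have hsy₀ : s < y₀ := lt_of_le_of_lt hsy₁ (max_lt (by linarith) (by linarith))
  have hsa : a ≤ s := le_csInf hEne fun z hz => hz.1
  have claim : ∀ z, s < z → z ≤ y₀ → q z = m * z + c := by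
    intro z hz1 hz2
    obtain ⟨y, hyE, hyz⟩ := exists_lt_of_csInf_lt hEne hz1
    exact hyE.2.2 z (le_of_lt hyz) hz2
  have hsle : s ≤ a := by
    by_contra hgt
    push_neg at hgt
    obtain ⟨ε', hε', m', c', hp'⟩ := hgood s hgt (by linarith)
    set t := min ε' (y₀ - s) with htdef
    have ht : 0 < t := lt_min hε' (by linarith)
    have ht1 : t ≤ ε' := min_le_left _ _
    have ht2 : t ≤ y₀ - s := min_le_right _ _
    have hz₁ : q (s + t / 2) = m * (s + t / 2) + c := claim _ (by linarith) (by linarith)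
    have hz₂ : q (s + t / 3) = m * (s + t / 3) + c := claim _ (by linarith) (by linarith)
    have hz₁' : q (s + t / 2) = m' * (s + t / 2) + c' := hp' _ (by
      rw [show s + t / 2 - s = t / 2 by ring, abs_of_pos (by linarith)]; linarith)
    have hz₂' : q (s + t / 3) = m' * (s + t / 3) + c' := hp' _ (by
      rw [show s + t / 3 - s = t / 3 by ring, abs_of_pos (by linarith)]; linarith)
    have hmm : m = m' := by nlinarith [hz₁.symm.trans hz₁', hz₂.symm.trans hz₂']
    have hcc : c = c' := by
      have := hz₁.symm.trans hz₁'
      rw [hmm] at this; linarith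
    set y' := max ((a + s) / 2) (s - ε' / 2) with hy'def
    have hy'a : a ≤ y' := le_trans (by linarith) (le_max_left _ _)
    have hy's : y' < s := max_lt (by linarith) (by linarith)
    have hy'E : y' ∈ E := by
      refine ⟨hy'a, by linarith, fun z hz1 hz2 => ?_⟩
      rcases le_or_gt z s with hzs | hzs
      · have hzlo : s - ε' / 2 ≤ z := le_trans (le_max_right _ _) hz1
        have := hp' z (by rw [abs_lt]; constructor <;> linarith)
        rw [this, hmm, hcc]
      · exact claim z hzs hz2
    have : s ≤ y' := csInf_le hEbb hy'E
    linarith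
  have haff : ∀ z, a < z → z ≤ y₀ → q z = m * z + c := fun z hz1 hz2 =>
    claim z (lt_of_le_of_lt hsle hz1) hz2
  have hmpos : 0 < m := by
    have h1 : q (a + δ / 2) < q (a + δ) := hq (by linarith)
    rw [haff _ (by linarith) (by simp only [hy₀def]; linarith),
      haff _ (by linarith) (by simp only [hy₀def]; linarith)] at h1
    nlinarith
  have hc : m * a + c = a := by
    have h1 : Filter.Tendsto (⇑q) (nhdsWithin a (Set.Ioi a)) (nhds a) := by
      have h0 : Filter.Tendsto (⇑q) (nhdsWithin a (Set.Ioi a)) (nhds (q a)) :=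
        ((perm_continuous q hq).tendsto a).mono_left nhdsWithin_le_nhds
      rwa [ha] at h0
    have h2 : Filter.Tendsto (fun z => m * z + c) (nhdsWithin a (Set.Ioi a))
        (nhds (m * a + c)) := by
      exact ((continuous_const.mul continuous_id).add continuous_const).tendsto a
        |>.mono_left nhdsWithin_le_nhds
    have hev : (fun z => m * z + c) =ᶠ[nhdsWithin a (Set.Ioi a)] ⇑q := by
      filter_upwards [Ioc_mem_nhdsGT_of_mem (Set.left_mem_Ico.mpr (by linarith : a < y₀))]
        with z hz
      exact (haff z hz.1 hz.2).symm
    exact tendsto_nhds_unique (h2.congr' hev) h1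
  exact ⟨δ, hδ, m, hmpos, fun y h1 h2 => by rw [haff y h1 h2]; linarith [hc]⟩

end Stmt9Helpers

theorem stmt9 (H : Subgroup (Equiv.Perm ℝ)) (hH : ∀ g ∈ H, PLHomeo g)
    (a b : ℝ) (hA : IsGroupOrbital H (Set.Ioo a b))
    (h : Equiv.Perm ℝ) (hh : h ∈ H) (d : ℝ) (had : a < d) (hdb : d < b)
    (horb : IsOrbital ⇑h (Set.Ioo a d))
    (hno : ∀ c e : ℝ, IsOrbital ⇑h (Set.Ioo c e) →
      (c = a ∧ e = d) ∨ (c ≠ a ∧ c ≠ b ∧ e ≠ a ∧ e ≠ b)) :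
    HasTransitionChain2 H := by
  classical
  obtain ⟨x₀, hx₀, hAeq⟩ := hA
  obtain ⟨x₁, hx₁, hBeq⟩ := horb
  have hhsm : StrictMono ⇑h := (hH h hh).1.1
  have hab : a < b := had.trans hdb
  have hGopen : IsOpen (GSupp H) := by
    have hrw : GSupp H = ⋃ g ∈ {g : Equiv.Perm ℝ | g ∈ H}, Supp ⇑g := by
      ext x; simp [GSupp, Supp]
    rw [hrw]
    exact isOpen_biUnion fun g hg => supp_isOpen_s9 g (hH g hg).1.1
  have hends := endpoint_not_mem (GSupp H) hGopen x₀ a b hab hAeq.symm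
  have hfixa : ∀ q : Equiv.Perm ℝ, q ∈ H → q a = a := by
    intro q hq
    by_contra hne
    exact hends.1 ⟨q, hq, hne⟩
  have hhopen : IsOpen (Supp ⇑h) := supp_isOpen_s9 h hhsm
  have hdfix : h d = d := by
    have hend2 := endpoint_not_mem (Supp ⇑h) hhopen x₁ a d had hBeq.symm
    by_contra hne
    exact hend2.2 hne
  have hsubA : Set.Ioo a b ⊆ GSupp H := by
    rw [hAeq]; exact connectedComponentIn_subset _ _
  have hsubB : Set.Ioo a d ⊆ Supp ⇑h := by
    rw [hBeq]; exact connectedComponentIn_subset _ _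
  have hdG : d ∈ GSupp H := hsubA ⟨had, hdb⟩
  obtain ⟨g₀, hg₀H, hg₀d⟩ := hdG
  obtain ⟨g, hgH, hgd⟩ : ∃ g, g ∈ H ∧ d < g d := by
    rcases lt_or_gt_of_ne hg₀d with hlt | hgt
    · refine ⟨g₀⁻¹, inv_mem hg₀H, ?_⟩
      have hsm0 : StrictMono ⇑g₀ := (hH g₀ hg₀H).1.1
      have h2 := (inv_strictMono g₀ hsm0) hlt
      rwa [Equiv.Perm.inv_apply_self] at h2
    · exact ⟨g₀, hg₀H, hgt⟩
  have hgsm : StrictMono ⇑g := (hH g hgH).1.1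
  have hga : g a = a := hfixa g hgH
  have hha : h a = a := hfixa h hh
  obtain ⟨δ₁, hδ₁, m, hm, Hh⟩ := affine_germ h hhsm (hH h hh).2 a hha
  obtain ⟨δ₂, hδ₂, μ, hμ, Hg⟩ := affine_germ g hgsm (hH g hgH).2 a hga
  obtain ⟨p, hpdef⟩ : ∃ p : Equiv.Perm ℝ, p = g * h * g⁻¹ * h⁻¹ := ⟨_, rfl⟩
  have hpH : p ∈ H := by
    rw [hpdef]
    exact mul_mem (mul_mem (mul_mem hgH hh) (inv_mem hgH)) (inv_mem hh)
  have hpsm : StrictMono ⇑p := (hH p hpH).1.1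
  have hpapp : ∀ y : ℝ, p y = g (h (g⁻¹ (h⁻¹ y))) := by
    intro y
    rw [hpdef]
    simp [Equiv.Perm.mul_apply]
  set ε : ℝ := min (min (m * δ₁) (m * (μ * δ₂))) (min (m * (μ * δ₁)) (μ * δ₂)) with hεdef
  have hεpos : 0 < ε := lt_min (lt_min (by positivity) (by positivity))
    (lt_min (by positivity) (by positivity))
  have he1 : ε ≤ m * δ₁ := le_trans (min_le_left _ _) (min_le_left _ _)
  have he2 : ε ≤ m * (μ * δ₂) := le_trans (min_le_left _ _) (min_le_right _ _)
  have he3 : ε ≤ m * (μ * δ₁) := le_trans (min_le_right _ _) (min_le_left _ _)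
  have he4 : ε ≤ μ * δ₂ := le_trans (min_le_right _ _) (min_le_right _ _)
  have hpfix : ∀ y, a < y → y < a + ε → p y = y := by
    intro y hy1 hy2
    have hya : 0 < y - a := by linarith
    have hyε : y - a < ε := by linarith
    have hmμ : 0 < m * μ := mul_pos hm hμ
    have hb1 : a < a + (y - a) / m := by
      have := div_pos hya hm; linarith
    have hb1' : a + (y - a) / m ≤ a + δ₁ := by
      have : (y - a) / m ≤ δ₁ := by rw [div_le_iff₀ hm]; nlinarith
      linarith
    have hb2 : a < a + (y - a) / (m * μ) := by
      have := div_pos hya hmμ; linarith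
    have hb2' : a + (y - a) / (m * μ) ≤ a + δ₂ := by
      have : (y - a) / (m * μ) ≤ δ₂ := by rw [div_le_iff₀ hmμ]; nlinarith
      linarith
    have hb3' : a + (y - a) / (m * μ) ≤ a + δ₁ := by
      have : (y - a) / (m * μ) ≤ δ₁ := by rw [div_le_iff₀ hmμ]; nlinarith
      linarith
    have hb4 : a < a + (y - a) / μ := by
      have := div_pos hya hμ; linarith
    have hb4' : a + (y - a) / μ ≤ a + δ₂ := by
      have : (y - a) / μ ≤ δ₂ := by rw [div_le_iff₀ hμ]; nlinarith
      linarith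
    have hz₁ : h⁻¹ y = a + (y - a) / m := by
      have harith : m * (a + (y - a) / m - a) = y - a := by
        field_simp; ring
      have hq1 : h (a + (y - a) / m) = y := by
        rw [Hh _ hb1 hb1', harith]; ring
      rw [Equiv.Perm.inv_def, Equiv.symm_apply_eq]
      exact hq1.symm
    have hz₂ : g⁻¹ (a + (y - a) / m) = a + (y - a) / (m * μ) := by
      have harith : μ * (a + (y - a) / (m * μ) - a) = (y - a) / m := by
        field_simp; ring
      have hq2 : g (a + (y - a) / (m * μ)) = a + (y - a) / m := by
        rw [Hg _ hb2 hb2', harith]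
      rw [Equiv.Perm.inv_def, Equiv.symm_apply_eq]
      exact hq2.symm
    have hz₃ : h (a + (y - a) / (m * μ)) = a + (y - a) / μ := by
      have harith : m * (a + (y - a) / (m * μ) - a) = (y - a) / μ := by
        field_simp; ring
      rw [Hh _ hb2 hb3', harith]
    have hz₄ : g (a + (y - a) / μ) = y := by
      have harith : μ * (a + (y - a) / μ - a) = y - a := by
        field_simp; ring
      rw [Hg _ hb4 hb4', harith]; ring
    rw [hpapp, hz₁, hz₂, hz₃, hz₄]
  have hginva : g⁻¹ a = a := by
    have : g (g⁻¹ a) = g a := by rw [Equiv.Perm.apply_inv_self, hga]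
    exact g.injective this
  have hw : g⁻¹ d ∈ Set.Ioo a d := by
    constructor
    · have h2 := (inv_strictMono g hgsm) had
      rwa [hginva] at h2
    · have h2 := (inv_strictMono g hgsm) hgd
      rwa [Equiv.Perm.inv_apply_self] at h2
  have hwsupp : g⁻¹ d ∈ Supp ⇑h := hsubB hw
  have hinvd : h⁻¹ d = d := by
    have : h (h⁻¹ d) = h d := by rw [Equiv.Perm.apply_inv_self, hdfix]
    exact h.injective this
  have hpd : p d ≠ d := by
    intro hcon
    rw [hpapp, hinvd] at hcon
    have h2 : g (h (g⁻¹ d)) = g (g⁻¹ d) := by rw [hcon, Equiv.Perm.apply_inv_self]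
    exact hwsupp (g.injective h2)
  have hdp : d ∈ Supp ⇑p := hpd
  have hpopen : IsOpen (Supp ⇑p) := supp_isOpen_s9 p hpsm
  set C := connectedComponentIn (Supp ⇑p) d with hCdef
  have hCopen : IsOpen C := hpopen.connectedComponentIn
  have hCconn : IsPreconnected C := isPreconnected_connectedComponentIn
  have hdC : d ∈ C := mem_connectedComponentIn hdp
  have hCsub : C ⊆ Set.Ioo a b := by
    have hdcomp : d ∈ connectedComponentIn (GSupp H) x₀ := by rw [← hAeq]; exact ⟨had, hdb⟩
    have h1 : Set.Ioo a b = connectedComponentIn (GSupp H) d := by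
      rw [hAeq]; exact connectedComponentIn_eq hdcomp
    rw [h1]
    refine hCconn.subset_connectedComponentIn hdC ?_
    intro z hz
    exact ⟨p, hpH, connectedComponentIn_subset _ _ hz⟩
  have hCbb : BddBelow C := ⟨a, fun z hz => le_of_lt (hCsub hz).1⟩
  have hCba : BddAbove C := ⟨b, fun z hz => le_of_lt (hCsub hz).2⟩
  have hCIoo : C = Set.Ioo (sInf C) (sSup C) :=
    open_conn_eq_Ioo C hCopen hCconn ⟨d, hdC⟩ hCbb hCba
  have hdmem : d ∈ Set.Ioo (sInf C) (sSup C) := by rw [← hCIoo]; exact hdC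
  have hac : a + ε ≤ sInf C := by
    refine le_csInf ⟨d, hdC⟩ fun z hz => ?_
    by_contra hlt
    push_neg at hlt
    have hz1 : p z ≠ z := connectedComponentIn_subset _ _ hz
    exact hz1 (hpfix z (hCsub hz).1 hlt)
  refine ⟨h, hh, p, hpH, a, sInf C, d, sSup C, ⟨x₁, hx₁, hBeq⟩,
    ⟨d, hdp, hCIoo.symm.trans hCdef⟩,
    lt_of_lt_of_le (by linarith) hac, hdmem.1, hdmem.2⟩
end
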